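/- arXiv:1304.0036 — 3 statements merged into one kernel-verified Lean document; each statement's English description precedes it below -/
import Mathlib

section
/- Let d ≥ 2 be an integer. Then (1/4)·(log(d-1))² < N(d) < (1/4)·(log(d-1))² + 1, and moreover N(d) < (log d)². -/
open scoped ENNReal BigOperators

noncomputable section

/-- Binary entropy (natural log), with Lean's convention `Real.log 0 = 0`. -/
def binEntropy' (x : ℝ) : ℝ := -(x * Real.log x) - (1 - x) * Real.log (1 - x)

/-- Binary relative entropy, valued in `[0,∞]`. -/
def binRelEntropy (x y : ℝ) : ℝ≥0∞ :=
  if (y = 0 ∧ 0 < x) ∨ (y = 1 ∧ x < 1) then ⊤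
  else ENNReal.ofReal (x * Real.log (x / y) + (1 - x) * Real.log ((1 - x) / (1 - y)))

/-- `M(Δ,d)`: infimum of binary relative entropies under the entropy-difference constraint. -/
def Mfun (Δ : ℝ) (d : ℕ) : ℝ≥0∞ :=
  sInf {m : ℝ≥0∞ | ∃ s r : ℝ, s ∈ Set.Icc (0:ℝ) (((d:ℝ) - 1) / d) ∧
    r ∈ Set.Icc (0:ℝ) (((d:ℝ) - 1) / d) ∧
    binEntropy' s - binEntropy' r + (s - r) * Real.log ((d:ℝ) - 1) = Δ ∧
    m = binRelEntropy s r}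

/-- Shannon entropy of a probability vector on `Fin d` (natural log). -/
def shEntropy {d : ℕ} (p : Fin d → ℝ) : ℝ := ∑ i, -(p i * Real.log (p i))

/-- Relative entropy between probability vectors on `Fin d`, valued in `[0,∞]`. -/
def relEntropy {d : ℕ} (p q : Fin d → ℝ) : ℝ≥0∞ :=
  if ∀ i, q i = 0 → p i = 0
  then ENNReal.ofReal (∑ i, p i * Real.log (p i / q i))
  else ⊤

/-- `N(d) = sup_{0<r<1/2} r(1-r) (log(((1-r)/r)(d-1)))²`. -/
def Nfun (d : ℕ) : ℝ :=
  sSup {v : ℝ | ∃ r : ℝ, 0 < r ∧ r < 1/2 ∧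
    v = r * (1 - r) * (Real.log ((1 - r) / r * ((d:ℝ) - 1)))^2}

lemma exp_cubic (u : ℝ) (hu : 0 ≤ u) : 1 + u + u^2/2 + u^3/6 ≤ Real.exp u := by
  have h := Real.sum_le_exp_of_nonneg hu 4
  simp [Finset.sum_range_succ, Nat.factorial] at h
  nlinarith [h]

lemma exp_neg_quad (u : ℝ) (hu : 0 ≤ u) : Real.exp (-u) ≤ 1 - u + u^2/2 := by
  have h := exp_cubic u hu
  have hpos : (0:ℝ) < Real.exp u := Real.exp_pos u
  have h3 : (0:ℝ) ≤ 1 - u + u^2/2 := by nlinarith [sq_nonneg (u-1)]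
  have hne : Real.exp (-u) = 1 / Real.exp u := by
    rw [Real.exp_neg]; ring
  rw [hne, div_le_iff₀ hpos]
  have key := mul_le_mul_of_nonneg_left h h3
  have hp3 : 0 ≤ u^3 := pow_nonneg hu 3
  have hp4 : 0 ≤ u^4 := pow_nonneg hu 4
  have hp5 : 0 ≤ u^5 := pow_nonneg hu 5
  nlinarith [key, hp3, hp4, hp5]

lemma sinh_gap (a : ℝ) (ha : 1 ≤ a) : 2*Real.log a + (Real.log a)^3/6 ≤ a - 1/a := by
  set u := Real.log a with hu
  have hu0 : 0 ≤ u := Real.log_nonneg ha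
  have ha0 : 0 < a := lt_of_lt_of_le one_pos ha
  have he : Real.exp u = a := Real.exp_log ha0
  have h1 := exp_cubic u hu0
  have h2 := exp_neg_quad u hu0
  have hinv : Real.exp (-u) = 1 / a := by rw [Real.exp_neg, he, one_div]
  rw [he] at h1
  rw [hinv] at h2
  nlinarith [h1, h2]

lemma log_ge_aux2 (r : ℝ) (h0 : 0 < r) (h2 : r < 1/2) :
    1 - r/(1-r) ≤ Real.log ((1-r)/r) := by
  have hr1 : 0 < 1 - r := by linarith
  have h := Real.log_le_sub_one_of_pos (show 0 < r/(1-r) by positivity)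
  have hinv : Real.log (r/(1-r)) = - Real.log ((1-r)/r) := by
    rw [← Real.log_inv]
    congr 1
    field_simp
  rw [hinv] at h
  linarith

lemma log_ge_aux (r : ℝ) (h0 : 0 < r) (h2 : r < 1/2) :
    1 - 2*r ≤ Real.log ((1-r)/r) := by
  have hr1 : 0 < 1 - r := by linarith
  have h := log_ge_aux2 r h0 h2
  have hfrac : r/(1-r) ≤ 2*r := by
    rw [div_le_iff₀ hr1]; nlinarith
  linarith

lemma st_le (r : ℝ) (h0 : 0 < r) (h2 : r < 1/2) :
    Real.sqrt (r*(1-r)) * Real.log ((1-r)/r) ≤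
      (1 - 2*r) - Real.sqrt (r*(1-r)) * (1-2*r)^3/48 := by
  have hr1 : 0 < 1 - r := by linarith
  set a := Real.sqrt ((1-r)/r) with hadef
  set s := Real.sqrt (r*(1-r)) with hsdef
  have hdnn : (0:ℝ) ≤ (1-r)/r := by positivity
  have ha2 : a^2 = (1-r)/r := Real.sq_sqrt hdnn
  have ha0 : 0 ≤ a := Real.sqrt_nonneg _
  have hs0 : 0 ≤ s := Real.sqrt_nonneg _
  have hd1 : 1 ≤ (1-r)/r := by rw [le_div_iff₀ h0]; linarith
  have ha1 : 1 ≤ a := by nlinarith [ha2, ha0, hd1]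
  have hapos : 0 < a := lt_of_lt_of_le one_pos ha1
  have hsa : s * a = 1 - r := by
    rw [hsdef, hadef, ← Real.sqrt_mul (by positivity)]
    have : r*(1-r)*((1-r)/r) = (1-r)^2 := by field_simp
    rw [this, Real.sqrt_sq hr1.le]
  have hra : r * a = s := by
    rw [hsdef, hadef]
    rw [show r = Real.sqrt (r^2) from (Real.sqrt_sq h0.le).symm, ← Real.sqrt_mul (by positivity)]
    congr 1
    field_simp
    linear_combination (Real.sqrt (r^2) - 1) * (Real.sq_sqrt (sq_nonneg r) : Real.sqrt (r^2) ^ 2 = r^2)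
  have hsinva : s * (1/a) = r := by
    rw [← hra]; field_simp
  have ht : Real.log ((1-r)/r) = 2 * Real.log a := by
    rw [← ha2, Real.log_pow]; push_cast; ring
  have hgap := sinh_gap a ha1
  have hA : s * (2*Real.log a) ≤ (1 - 2*r) - s * (Real.log a)^3/6 := by
    have := mul_le_mul_of_nonneg_left hgap hs0
    have hexp : s * (a - 1/a) = (1-r) - r := by
      rw [mul_sub, hsa, hsinva]
    nlinarith [this, hexp]
  have htx : 1 - 2*r ≤ 2 * Real.log a := by
    rw [← ht]; exact log_ge_aux r h0 h2
  have hx0 : (0:ℝ) ≤ 1 - 2*r := by linarith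
  have hB : (1-2*r)^3 ≤ (2 * Real.log a)^3 := pow_le_pow_left₀ hx0 htx 3
  have hB' : (1-2*r)^3 ≤ 8 * (Real.log a)^3 := by nlinarith [hB]
  have hC := mul_le_mul_of_nonneg_left hB' hs0
  rw [ht]
  nlinarith [hA, hC]

lemma UBgen (L r : ℝ) (hL : 0 ≤ L) (h0 : 0 < r) (h2 : r < 1/2) :
    r*(1-r)*(Real.log ((1-r)/r) + L)^2 ≤ (1 + L/2)^2 := by
  set s := Real.sqrt (r*(1-r)) with hsdef
  set t := Real.log ((1-r)/r) with htdef
  have hs0 : 0 ≤ s := Real.sqrt_nonneg _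
  have hs2 : s^2 = r*(1-r) := Real.sq_sqrt (by nlinarith)
  have hshalf : s ≤ 1/2 := by nlinarith [hs2, hs0]
  have hst := st_le r h0 h2
  have htx := log_ge_aux r h0 h2
  have hx0 : (0:ℝ) ≤ 1 - 2*r := by linarith
  have hcube : 0 ≤ s * (1-2*r)^3 / 48 := by positivity
  have h1 : s * (t + L) ≤ 1 + L/2 := by
    have : s * t ≤ 1 - 2*r := by nlinarith [hst, hcube]
    nlinarith [mul_le_mul_of_nonneg_right hshalf hL]
  have h2' : 0 ≤ s * (t + L) := by
    have : 0 ≤ t := by linarith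
    positivity
  calc r*(1-r)*(t + L)^2 = (s*(t+L))^2 := by rw [mul_pow]; rw [hs2]
    _ ≤ (1 + L/2)^2 := by nlinarith [h1, h2']


lemma case1_arith (L x P : ℝ) (hL : 1/2 ≤ L) (hx0 : 0 < x) (hx1 : x < 1)
    (hP0 : 0 < P) (hx3 : 1/(8*P) ≤ x^3) :
    (96*L-1)/(73728*P) ≤ L*x^3/96 - x^6/9216 := by
  have hx3' : 1 ≤ 8*P*x^3 := by
    have h := (div_le_iff₀ (show (0:ℝ) < 8*P by positivity)).mp hx3
    linarith only [h]
  have hx3le1 : x^3 ≤ 1 := pow_le_one₀ hx0.le hx1.le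
  have hx3pos : 0 < x^3 := pow_pos hx0 3
  have he1 : x^6 ≤ x^3 := by nlinarith [mul_le_mul_of_nonneg_left hx3le1 hx3pos.le]
  rw [div_le_iff₀ (by positivity)]
  have s1 := mul_le_mul_of_nonneg_left he1 (show (0:ℝ) ≤ 8*P by positivity)
  have s2 : (96*L-1) ≤ (96*L-1)*(8*P*x^3) :=
    le_mul_of_one_le_right (by linarith only [hL]) hx3'
  nlinarith [s1, s2]

lemma case2_arith (L y : ℝ) (hL : 1/2 ≤ L) (hy0 : 0 < y)
    (hyeq : y*(L+1) = 1/2) (hyle : y ≤ 1/3) :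
    (y + L/2)^2 ≤ 1/2 + L^2/4 := by
  nlinarith [hyeq, mul_nonneg hy0.le (by linarith only [hyle] : (0:ℝ) ≤ 1/3 - y)]

lemma eps_small (L P : ℝ) (hL : 1/2 ≤ L) (hP0 : 0 < P) (hPge : L + 1 ≤ P) :
    (96*L-1)/(73728*P) ≤ 1/2 := by
  rw [div_le_iff₀ (by positivity)]
  nlinarith [hPge, hL]

lemma w_le_one (x s : ℝ) (hxs1 : x^2 + 4*s^2 = 1) (hs0 : 0 ≤ s) : 2*s ≤ 1 := by
  nlinarith [sq_nonneg x]

lemma P_ge (L : ℝ) (hL : 1/2 ≤ L) : L + 1 ≤ (L+1)^3 := by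
  have h : 0 ≤ (L+1)*(L*(L+2)) :=
    mul_nonneg (by linarith) (mul_nonneg (by linarith) (by linarith))
  nlinarith [h]

lemma cauchy_arith (x s m : ℝ) (hxs1 : x^2 + 4*s^2 = 1) :
    (x + 2*s*m)^2 ≤ 1 + m^2 := by
  nlinarith [sq_nonneg (2*s - x*m), hxs1, sq_nonneg m]

lemma UB3 (L r : ℝ) (hL : 1/2 ≤ L) (h0 : 0 < r) (h2 : r < 1/2) :
    r*(1-r)*(Real.log ((1-r)/r) + L)^2
      ≤ 1 + L^2/4 - (96*L - 1)/(73728*(L+1)^3) := by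
  obtain ⟨s, hsdef⟩ : ∃ s, s = Real.sqrt (r*(1-r)) := ⟨_, rfl⟩
  obtain ⟨t, htdef⟩ : ∃ t, t = Real.log ((1-r)/r) := ⟨_, rfl⟩
  obtain ⟨P, hPdef⟩ : ∃ P, P = (L+1)^3 := ⟨_, rfl⟩
  obtain ⟨x, hxdef⟩ : ∃ x, x = 1 - 2*r := ⟨_, rfl⟩
  obtain ⟨y, hydef⟩ : ∃ y, y = 1/(2*(L+1)) := ⟨_, rfl⟩
  rw [← htdef, ← hPdef]
  have hst : s*t ≤ x - s*x^3/48 := by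
    rw [hsdef, htdef, hxdef]; have := st_le r h0 h2; linarith only [this]
  have hs0 : 0 ≤ s := hsdef ▸ Real.sqrt_nonneg _
  have hs2 : s^2 = r*(1-r) := by rw [hsdef]; exact Real.sq_sqrt (by nlinarith)
  have htx : x ≤ t := by rw [htdef, hxdef]; exact log_ge_aux r h0 h2
  have hx0 : 0 < x := by rw [hxdef]; linarith only [h2, hxdef]
  have hx1 : x < 1 := by rw [hxdef]; linarith only [h0]
  have hxs1 : x^2 + 4*s^2 = 1 := by rw [hs2, hxdef]; ring
  obtain ⟨m, hmdef⟩ : ∃ m, m = (L - x^3/48)/2 := ⟨_, rfl⟩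
  have hx3pos : 0 < x^3 := pow_pos hx0 3
  have hx3le1 : x^3 ≤ 1 := pow_le_one₀ hx0.le hx1.le
  have hm0 : 0 ≤ m := by rw [hmdef]; linarith only [hL, hx3le1]
  have hmL : m ≤ L/2 := by rw [hmdef]; linarith only [hx3pos]
  have hmeq : 2*s*m = s*L - s*x^3/48 := by rw [hmdef]; ring
  have hstL : s*(t+L) ≤ x + 2*s*m := by nlinarith [hst, hmeq]
  have hnn : 0 ≤ s*(t+L) := mul_nonneg hs0 (by linarith only [htx, hx0, hL])
  have hsq : r*(1-r)*(t+L)^2 = (s*(t+L))^2 := by rw [mul_pow, hs2]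
  have hb1 : (s*(t+L))^2 ≤ (x + 2*s*m)^2 := pow_le_pow_left₀ hnn hstL 2
  have hkey : (x + 2*s*m)^2 ≤ 1 + m^2 := cauchy_arith x s m hxs1
  have hmexp : 1 + m^2 = 1 + L^2/4 - L*x^3/96 + x^6/9216 := by rw [hmdef]; ring
  have hP0 : 0 < P := by rw [hPdef]; positivity
  rcases le_or_gt y x with hc | hc
  · have h1 : y^3 ≤ x^3 := pow_le_pow_left₀ (by rw [hydef]; positivity) hc 3
    have h2eq : y^3 = 1/(8*P) := by rw [hydef, hPdef]; field_simp; ring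
    have hx3 : 1/(8*P) ≤ x^3 := by linarith only [h1, h2eq]
    have hfin := case1_arith L x P hL hx0 hx1 hP0 hx3
    linarith only [hsq, hb1, hkey, hmexp, hfin]
  · have hw1 : 2*s ≤ 1 := w_le_one x s hxs1 hs0
    have hwm : 2*s*m ≤ m := by
      calc 2*s*m = (2*s)*m := by ring
        _ ≤ 1*m := mul_le_mul_of_nonneg_right hw1 hm0
        _ = m := one_mul m
    have hb : s*(t+L) ≤ y + L/2 := by linarith only [hstL, hwm, hmL, hc]
    have hb2 : (s*(t+L))^2 ≤ (y + L/2)^2 := pow_le_pow_left₀ hnn hb 2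
    have hy0 : 0 < y := by rw [hydef]; positivity
    have hyeq : y*(L+1) = 1/2 := by rw [hydef]; field_simp
    have hyle : y ≤ 1/3 := by
      rw [hydef, div_le_div_iff₀ (by positivity) (by norm_num)]
      linarith only [hL]
    have hsq3 := case2_arith L y hL hy0 hyeq hyle
    have hPge : L + 1 ≤ P := hPdef ▸ P_ge L hL
    have heps := eps_small L P hL hP0 hPge
    linarith only [hsq, hb2, hsq3, heps]

lemma lb_poly (e : ℝ) (he : 0 < e) (he2 : e ≤ 1/2) :
    (2-4*e)^2*(4*e^2*(1+e)) < (1-e)*(2-2*e-2*e^2)^2*(4*e^2) := by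
  have hcube : (0:ℝ) < 1 - e - e^2 - e^3 := by
    nlinarith [mul_nonneg he.le (by linarith only [he2] : (0:ℝ) ≤ 1/2 - e),
      mul_nonneg (mul_nonneg he.le he.le) (by linarith only [he2] : (0:ℝ) ≤ 1/2 - e)]
  nlinarith [mul_pos (mul_pos (mul_pos he he) (mul_pos he he)) hcube]

lemma LBlem (L : ℝ) (hL : 0 ≤ L) :
    ∃ r : ℝ, 0 < r ∧ r < 1/2 ∧ L^2/4 < r*(1-r)*(Real.log ((1-r)/r) + L)^2 := by
  obtain ⟨e, he_def⟩ : ∃ e, e = 2/(L+4) := ⟨_, rfl⟩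
  have hL4 : (0:ℝ) < L + 4 := by linarith
  have he : 0 < e := by rw [he_def]; positivity
  have he2 : e ≤ 1/2 := by
    rw [he_def, div_le_div_iff₀ hL4 (by norm_num)]; linarith
  have heL : e * (L+4) = 2 := by rw [he_def]; field_simp
  have hLeq : L = (2-4*e)/e := by
    rw [eq_div_iff (ne_of_gt he)]; linear_combination heL
  refine ⟨(1-e)/2, by linarith, by linarith, ?_⟩
  have h0 : 0 < (1-e)/2 := by linarith
  have h2 : (1-e)/2 < 1/2 := by linarith
  have htlb := log_ge_aux2 ((1-e)/2) h0 h2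
  obtain ⟨t, htdef⟩ : ∃ t, t = Real.log ((1-(1-e)/2)/((1-e)/2)) := ⟨_, rfl⟩
  rw [← htdef]
  rw [← htdef] at htlb
  have h1e : (0:ℝ) < 1+e := by linarith
  have hfrac : 1 - ((1-e)/2)/(1-(1-e)/2) = 2*e/(1+e) := by
    rw [show 1-(1-e)/2 = (1+e)/2 by ring]
    rw [div_div_div_cancel_right₀]
    · field_simp
      ring
    · norm_num
  rw [hfrac] at htlb
  have htb0 : 0 ≤ 2*e/(1+e) := by positivity
  have hrr : 0 < (1-e)/2*(1-(1-e)/2) := by nlinarith [he, he2]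
  have hmono : (1-e)/2*(1-(1-e)/2)*(2*e/(1+e) + L)^2
      ≤ (1-e)/2*(1-(1-e)/2)*(t + L)^2 := by
    have h1 : (2*e/(1+e) + L)^2 ≤ (t + L)^2 := by nlinarith [htlb, htb0, hL]
    nlinarith [hrr, h1]
  have hEq1 : L^2/4 = (2-4*e)^2/(4*e^2) := by rw [hLeq, div_pow]; ring
  have hEq2 : (1-e)/2*(1-(1-e)/2)*(2*e/(1+e) + L)^2
      = (1-e)*(2-2*e-2*e^2)^2/(4*e^2*(1+e)) := by
    rw [hLeq]
    field_simp
    ring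
  have key : L^2/4 < (1-e)/2*(1-(1-e)/2)*(2*e/(1+e) + L)^2 := by
    rw [hEq1, hEq2, div_lt_div_iff₀ (by positivity) (by positivity)]
    exact lb_poly e he he2
  linarith only [key, hmono]


lemma d4_arith (A B c : ℝ) (hsq : A^2 ≤ B^2) (h4 : 2*c ≤ B)
    (hc : (0.6931471803:ℝ) < c) : (1/4)*A^2 + 1 ≤ B^2 := by
  have h1 : (2*c)^2 ≤ B^2 := by
    nlinarith [mul_nonneg (sub_nonneg.mpr h4) (by linarith : (0:ℝ) ≤ B + 2*c)]
  nlinarith [hsq, h1, hc]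

lemma log3_lt : Real.log 3 < 67/60 := by
  have h32 : Real.log (3/2) ≤ 5/12 := by
    have h := sinh_gap (3/2) (by norm_num)
    have h0 : 0 ≤ Real.log (3/2) := Real.log_nonneg (by norm_num)
    nlinarith [h, pow_nonneg h0 3]
  have hsplit : Real.log (3/2) = Real.log 3 - Real.log 2 :=
    Real.log_div (by norm_num) (by norm_num)
  have := Real.log_two_lt_d9
  rw [hsplit] at h32
  norm_num at this ⊢
  linarith

lemma log3_gt_one : 1 < Real.log 3 := by
  rw [Real.lt_log_iff_exp_lt (by norm_num)]
  calc Real.exp 1 < 2.7182818286 := Real.exp_one_lt_d9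
    _ < 3 := by norm_num

lemma log3_gt : 53/50 < Real.log 3 := by
  rw [Real.lt_log_iff_exp_lt (by norm_num)]
  have h1 : Real.exp (53/50 : ℝ) ^ (50:ℕ) = Real.exp 53 := by
    rw [← Real.exp_nat_mul]; norm_num
  have h2 : Real.exp (53:ℝ) = Real.exp 1 ^ (53:ℕ) := by
    rw [← Real.exp_nat_mul]; norm_num
  have h3 : Real.exp 1 ^ (53:ℕ) ≤ (2.7182818286:ℝ)^(53:ℕ) :=
    pow_le_pow_left₀ (Real.exp_pos 1).le Real.exp_one_lt_d9.le 53
  have h4 : (2.7182818286:ℝ)^(53:ℕ) < 3^(50:ℕ) := by norm_num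
  have h5 : Real.exp (53/50 : ℝ) ^ (50:ℕ) < 3^(50:ℕ) := by
    rw [h1, h2]; exact lt_of_le_of_lt h3 h4
  exact lt_of_pow_lt_pow_left₀ 50 (by norm_num) h5

lemma d2_tangent (a : ℝ) (ha : 1 ≤ a) : 2*(a*Real.log a) ≤ (69/100)*(1+a^2) := by
  have htan0 : Real.log (a/3) ≤ a/3 - 1 :=
    Real.log_le_sub_one_of_pos (by positivity)
  have hsplit : Real.log (a/3) = Real.log a - Real.log 3 :=
    Real.log_div (by positivity) (by norm_num)
  have htan : Real.log a ≤ Real.log 3 + a/3 - 1 := by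
    rw [hsplit] at htan0; linarith
  have ha0 : (0:ℝ) ≤ a := by linarith
  have hmul := mul_le_mul_of_nonneg_left htan ha0
  have hb1 : Real.log 3 - 1 ≤ 7/60 := by have := log3_lt; linarith
  have hb0 : 0 ≤ Real.log 3 - 1 := by have := log3_gt_one; linarith
  nlinarith [hmul, sq_nonneg (a - (300/7)*(Real.log 3 - 1)), hb1, hb0, ha]

lemma d2_bound (r : ℝ) (h0 : 0 < r) (h2 : r < 1/2) :
    r*(1-r)*(Real.log ((1-r)/r))^2 ≤ (69/100)^2 := by
  have hr1 : 0 < 1 - r := by linarith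
  obtain ⟨a, hadef⟩ : ∃ a, a = Real.sqrt ((1-r)/r) := ⟨_, rfl⟩
  obtain ⟨s, hsdef⟩ : ∃ s, s = Real.sqrt (r*(1-r)) := ⟨_, rfl⟩
  have hdnn : (0:ℝ) ≤ (1-r)/r := by positivity
  have ha2 : a^2 = (1-r)/r := by rw [hadef]; exact Real.sq_sqrt hdnn
  have ha0 : 0 ≤ a := hadef ▸ Real.sqrt_nonneg _
  have hs0 : 0 ≤ s := hsdef ▸ Real.sqrt_nonneg _
  have hs2 : s^2 = r*(1-r) := by rw [hsdef]; exact Real.sq_sqrt (by nlinarith)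
  have hd1 : 1 ≤ (1-r)/r := by rw [le_div_iff₀ h0]; linarith
  have ha1 : 1 ≤ a := by nlinarith [ha2, ha0, hd1]
  have hra : r * a = s := by
    rw [hsdef, hadef]
    rw [show r = Real.sqrt (r^2) from (Real.sqrt_sq h0.le).symm, ← Real.sqrt_mul (by positivity)]
    congr 1
    field_simp
    linear_combination (Real.sqrt (r^2) - 1) * (Real.sq_sqrt (sq_nonneg r) : Real.sqrt (r^2) ^ 2 = r^2)
  have ht : Real.log ((1-r)/r) = 2 * Real.log a := by
    rw [← ha2, Real.log_pow]; push_cast; ring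
  have hra2 : r * a^2 = 1 - r := by rw [ha2]; field_simp
  have htang := d2_tangent a ha1
  have hst : s * Real.log ((1-r)/r) ≤ 69/100 := by
    have hmul := mul_le_mul_of_nonneg_left htang h0.le
    calc s * Real.log ((1-r)/r) = r * (2*(a*Real.log a)) := by
          rw [ht, ← hra]; ring
      _ ≤ r * ((69/100)*(1+a^2)) := hmul
      _ = (69/100)*(r + r*a^2) := by ring
      _ = 69/100 := by rw [hra2]; ring
  have hlog0 : 0 ≤ Real.log ((1-r)/r) := Real.log_nonneg hd1
  have hnn : 0 ≤ s * Real.log ((1-r)/r) := mul_nonneg hs0 hlog0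
  calc r*(1-r)*(Real.log ((1-r)/r))^2 = (s*Real.log ((1-r)/r))^2 := by
        rw [mul_pow, hs2]
    _ ≤ (69/100)^2 := by nlinarith [hst, hnn]


/-- simple bounds on `N(d)`. -/
theorem Nfun_bounds (d : ℕ) (hd : 2 ≤ d) :
    (1/4) * (Real.log ((d:ℝ) - 1))^2 < Nfun d ∧
    Nfun d < (1/4) * (Real.log ((d:ℝ) - 1))^2 + 1 ∧
    Nfun d < (Real.log d)^2 := by
  have hd2 : (2:ℝ) ≤ (d:ℝ) := by exact_mod_cast hd
  have hd1 : (1:ℝ) ≤ (d:ℝ) - 1 := by linarith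
  have hdpos : (0:ℝ) < (d:ℝ) - 1 := by linarith
  set L := Real.log ((d:ℝ) - 1) with hLdef
  have hL0 : 0 ≤ L := Real.log_nonneg hd1
  have hlogmul : ∀ r : ℝ, 0 < r → r < 1/2 →
      Real.log ((1-r)/r * ((d:ℝ)-1)) = Real.log ((1-r)/r) + L := by
    intro r h0 h2
    have hr1 : 0 < 1 - r := by linarith
    rw [Real.log_mul (by positivity) (ne_of_gt hdpos)]
  have hbdd : BddAbove {v : ℝ | ∃ r : ℝ, 0 < r ∧ r < 1/2 ∧
      v = r * (1 - r) * (Real.log ((1 - r) / r * ((d:ℝ) - 1)))^2} := by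
    refine ⟨(1 + L/2)^2, ?_⟩
    rintro v ⟨r, h0, h2, rfl⟩
    rw [hlogmul r h0 h2]
    exact UBgen L r hL0 h0 h2
  obtain ⟨r₀, hr0, hr2, hgt⟩ := LBlem L hL0
  have hmem : r₀ * (1 - r₀) * (Real.log ((1 - r₀) / r₀ * ((d:ℝ) - 1)))^2 ∈
      {v : ℝ | ∃ r : ℝ, 0 < r ∧ r < 1/2 ∧
        v = r * (1 - r) * (Real.log ((1 - r) / r * ((d:ℝ) - 1)))^2} :=
    ⟨r₀, hr0, hr2, rfl⟩
  have hne : {v : ℝ | ∃ r : ℝ, 0 < r ∧ r < 1/2 ∧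
      v = r * (1 - r) * (Real.log ((1 - r) / r * ((d:ℝ) - 1)))^2}.Nonempty := ⟨_, hmem⟩
  have hlow : (1/4) * L^2 < Nfun d := by
    have h1 := le_csSup hbdd hmem
    have h2 : L^2/4 < r₀ * (1 - r₀) * (Real.log ((1 - r₀) / r₀ * ((d:ℝ) - 1)))^2 := by
      rw [hlogmul r₀ hr0 hr2]; exact hgt
    have : Nfun d = sSup {v : ℝ | ∃ r : ℝ, 0 < r ∧ r < 1/2 ∧
        v = r * (1 - r) * (Real.log ((1 - r) / r * ((d:ℝ) - 1)))^2} := rfl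
    rw [this]
    linarith
  refine ⟨hlow, ?_⟩
  rcases eq_or_lt_of_le hd with heq | hgt3
  · -- d = 2
    have hd2' : (d:ℝ) = 2 := by exact_mod_cast heq.symm
    have hone : (d:ℝ) - 1 = 1 := by rw [hd2']; norm_num
    have hLzero : L = 0 := by rw [hLdef, hone, Real.log_one]
    have hub : Nfun d ≤ (69/100)^2 := by
      apply csSup_le hne
      rintro v ⟨r, h0, h2, rfl⟩
      rw [hlogmul r h0 h2, hLzero, add_zero]
      exact d2_bound r h0 h2
    constructor
    · rw [hLzero]; norm_num; nlinarith [hub]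
    · have hlog2 : (0.6931471803:ℝ) < Real.log d := by
        rw [hd2']; exact Real.log_two_gt_d9
      nlinarith [hub, hlog2]
  · -- d ≥ 3
    have hd3 : 3 ≤ d := hgt3
    have hd3' : (3:ℝ) ≤ (d:ℝ) := by exact_mod_cast hd3
    have h2led : (2:ℝ) ≤ (d:ℝ) - 1 := by linarith
    have hL2 : Real.log 2 ≤ L := Real.log_le_log (by norm_num) h2led
    have hLhalf : 1/2 ≤ L := by
      have := Real.log_two_gt_d9; linarith
    have heps : 0 < (96*L - 1)/(73728*(L+1)^3) := by
      apply div_pos (by linarith) (by positivity)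
    have hub : Nfun d ≤ 1 + L^2/4 - (96*L - 1)/(73728*(L+1)^3) := by
      apply csSup_le hne
      rintro v ⟨r, h0, h2, rfl⟩
      rw [hlogmul r h0 h2]
      exact UB3 L r hLhalf h0 h2
    have hmid : Nfun d < (1/4) * L^2 + 1 := by linarith
    refine ⟨hmid, ?_⟩
    have hthird : (1/4) * L^2 + 1 ≤ (Real.log d)^2 := by
      rcases eq_or_lt_of_le hd3 with heq3 | hgt4
      · -- d = 3
        have hd3'' : (d:ℝ) = 3 := by exact_mod_cast heq3.symm
        have hLlog2 : L = Real.log 2 := by rw [hLdef, hd3'']; norm_num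
        rw [hLlog2, hd3'']
        nlinarith [log3_gt, Real.log_two_lt_d9, Real.log_two_gt_d9,
          sq_nonneg (Real.log 3 - 53/50)]
      · -- d ≥ 4
        have hd4 : 4 ≤ d := hgt4
        have hd4' : (4:ℝ) ≤ (d:ℝ) := by exact_mod_cast hd4
        have hld : L ≤ Real.log d := Real.log_le_log hdpos (by linarith)
        have hlog4 : 2 * Real.log 2 ≤ Real.log d := by
          have h := Real.log_le_log (by norm_num : (0:ℝ) < 4) hd4'
          rw [show (4:ℝ) = 2^2 by norm_num, Real.log_pow] at h
          push_cast at h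
          linarith
        have hsq : L^2 ≤ (Real.log d)^2 := pow_le_pow_left₀ hL0 hld 2
        exact d4_arith L (Real.log d) (Real.log 2) hsq hlog4 Real.log_two_gt_d9
    linarith

end
end

section
/- Let d ≥ 2 be an integer. There is a unique r_d ∈ (0,1/2) attaining the supremum defining N(d), and it is the unique r ∈ (0,1/2) satisfying (1-2r)·log(((1-r)/r)·(d-1)) = 2. Moreover, a probability vector p on Fin d satisfies V(p) = N(d), where V(p) = ∑ i, p i · (log (p i))² - (∑ i, p i · log (p i))², if and only if p is a permutation of the vector (1 - r_d, r_d/(d-1), …, r_d/(d-1)). -/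
open scoped ENNReal BigOperators

noncomputable section

open Real Set Filter

namespace SVaux

variable {c : ℝ}

/-- L c r = log((1-r)/r * c) -/
noncomputable def L (c r : ℝ) : ℝ := Real.log ((1 - r) / r * c)
noncomputable def f (c r : ℝ) : ℝ := r * (1 - r) * (L c r) ^ 2
noncomputable def g (c r : ℝ) : ℝ := (1 - 2 * r) * L c r - 2

lemma L_eq (hc : 0 < c) {r : ℝ} (hr : r ∈ Ioo (0:ℝ) 1) :
    L c r = Real.log (1 - r) - Real.log r + Real.log c := by
  obtain ⟨h0, h1⟩ := hr
  have : (1 - r)/r ≠ 0 := by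
    apply div_ne_zero <;> [linarith; linarith]
  rw [L, Real.log_mul this (ne_of_gt hc), Real.log_div (by linarith) (ne_of_gt h0)]

lemma L_pos (hc : 1 ≤ c) {r : ℝ} (hr : r ∈ Ioo (0:ℝ) (1/2)) : 0 < L c r := by
  obtain ⟨h0, h1⟩ := hr
  have h2 : (1:ℝ) < (1 - r) / r := by
    rw [lt_div_iff₀ h0]; linarith
  have : (1:ℝ) < (1 - r) / r * c := by
    calc (1:ℝ) < (1-r)/r := h2
    _ = (1-r)/r * 1 := by ring
    _ ≤ (1-r)/r * c := by nlinarith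
  exact Real.log_pos this

lemma hasDerivAt_L (hc : 0 < c) {r : ℝ} (hr : r ∈ Ioo (0:ℝ) 1) :
    HasDerivAt (L c) (-(1 / (r * (1 - r)))) r := by
  obtain ⟨h0, h1⟩ := hr
  have h1' : (0:ℝ) < 1 - r := by linarith
  have key : HasDerivAt (fun r => Real.log (1 - r) - Real.log r + Real.log c)
      (-(1 / (r * (1 - r)))) r := by
    have d1 : HasDerivAt (fun r : ℝ => 1 - r) (-1) r := by
      simpa using (hasDerivAt_id r).const_sub 1
    have d2 : HasDerivAt (fun r : ℝ => Real.log (1 - r)) ((1 - r)⁻¹ * (-1)) r :=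
      (Real.hasDerivAt_log (ne_of_gt h1')).comp r d1
    have d3 : HasDerivAt (fun r : ℝ => Real.log r) r⁻¹ r := Real.hasDerivAt_log (ne_of_gt h0)
    have := (d2.sub d3).add_const (Real.log c)
    refine this.congr_deriv ?_
    field_simp
    ring
  apply key.congr_of_eventuallyEq
  filter_upwards [Ioo_mem_nhds h0 h1] with x hx
  rw [L_eq hc hx]

lemma hasDerivAt_g (hc : 0 < c) {r : ℝ} (hr : r ∈ Ioo (0:ℝ) 1) :
    HasDerivAt (g c) (-2 * L c r + (1 - 2*r) * (-(1 / (r * (1 - r))))) r := by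
  have d1 : HasDerivAt (fun r : ℝ => 1 - 2 * r) (-2) r := by
    simpa using ((hasDerivAt_id r).const_mul (2:ℝ)).const_sub 1
  show HasDerivAt (fun x => (1 - 2 * x) * L c x - 2) _ r
  simpa [g] using (d1.mul (hasDerivAt_L hc hr)).sub_const 2

lemma hasDerivAt_f (hc : 1 ≤ c) {r : ℝ} (hr : r ∈ Ioo (0:ℝ) 1) :
    HasDerivAt (f c) (L c r * g c r) r := by
  obtain ⟨h0, h1⟩ := hr
  have d1 : HasDerivAt (fun r : ℝ => r * (1 - r)) (1 - 2 * r) r := by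
    have := (hasDerivAt_id r).mul ((hasDerivAt_id r).const_sub 1)
    refine this.congr_deriv ?_ <;> simp <;> ring
  have d2 : HasDerivAt (fun r => (L c r) ^ 2) (2 * L c r * (-(1 / (r * (1 - r))))) r := by
    simpa using ((hasDerivAt_L (by linarith) ⟨h0,h1⟩).fun_pow 2)
  have := d1.mul d2
  refine this.congr_deriv ?_
  have hr0 : r * (1 - r) ≠ 0 := by
    have : 0 < r * (1-r) := by nlinarith
    exact ne_of_gt this
  rw [g]
  field_simp
  ring

lemma g_strictAntiOn (hc : 1 ≤ c) : StrictAntiOn (g c) (Ioc (0:ℝ) (1/2)) := by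
  have hc' : (0:ℝ) < c := by linarith
  apply strictAntiOn_of_deriv_neg (convex_Ioc _ _)
  · intro x hx
    exact (hasDerivAt_g hc' ⟨hx.1, by linarith [hx.2]⟩).continuousAt.continuousWithinAt
  · intro x hx
    rw [interior_Ioc] at hx
    have hx' : x ∈ Ioo (0:ℝ) 1 := ⟨hx.1, by linarith [hx.2]⟩
    rw [(hasDerivAt_g hc' hx').deriv]
    have h1 : 0 < L c x := L_pos hc hx
    have h2 : 0 < x * (1 - x) := by nlinarith [hx.1, hx.2]
    have h3 : 0 < 1 - 2*x := by linarith [hx.2]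
    have : 0 < (1 - 2*x) * (1 / (x * (1-x))) := by positivity
    nlinarith

lemma exists_root (hc : 1 ≤ c) : ∃ rd ∈ Ioo (0:ℝ) (1/2), g c rd = 0 := by
  have hc' : (0:ℝ) < c := by linarith
  set r1 : ℝ := 1 / (1 + Real.exp 5) with hr1def
  have he5 : (6:ℝ) < Real.exp 5 := by
    have := Real.add_one_lt_exp (by norm_num : (5:ℝ) ≠ 0); linarith
  have hr1pos : 0 < r1 := by positivity
  have hr1lt : r1 < 1/2 := by
    rw [hr1def, div_lt_div_iff₀ (by positivity) (by norm_num)]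
    linarith
  have hg1 : 0 < g c r1 := by
    have harg : (1 - r1) / r1 = Real.exp 5 := by
      rw [hr1def]
      field_simp
      ring
    have hL : 5 ≤ L c r1 := by
      rw [L]
      calc (5:ℝ) = Real.log (Real.exp 5) := by rw [Real.log_exp]
      _ ≤ Real.log ((1 - r1)/r1 * c) := by
          apply Real.log_le_log (by positivity)
          rw [harg]; nlinarith [Real.exp_pos (5:ℝ)]
    have h12 : 1 - 2 * r1 > 1/2 := by
      have : r1 < 1/4 := by
        rw [hr1def, div_lt_div_iff₀ (by positivity) (by norm_num)]
        linarith
      linarith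
    have hLpos : 0 < L c r1 := by linarith
    rw [g]
    nlinarith
  have hcont : ContinuousOn (g c) (Icc r1 (1/2)) := by
    intro x hx
    exact (hasDerivAt_g hc' ⟨lt_of_lt_of_le hr1pos hx.1, by linarith [hx.2]⟩).continuousAt.continuousWithinAt
  have hg2 : g c (1/2) = -2 := by
    rw [g]; ring
  have : (0:ℝ) ∈ Ioo (g c (1/2)) (g c r1) := by constructor <;> [rw [hg2]; skip] <;> [norm_num; exact hg1]
  obtain ⟨x, hx, hgx⟩ := intermediate_value_Ioo' (le_of_lt hr1lt) hcont this
  exact ⟨x, ⟨lt_trans hr1pos hx.1, hx.2⟩, hgx⟩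

lemma f_max (hc : 1 ≤ c) : ∃ rd ∈ Ioo (0:ℝ) (1/2), g c rd = 0 ∧
    (∀ r ∈ Ioc (0:ℝ) (1/2), r ≠ rd → f c r < f c rd) := by
  have hc' : (0:ℝ) < c := by linarith
  obtain ⟨rd, hrd, hg0⟩ := exists_root hc
  refine ⟨rd, hrd, hg0, ?_⟩
  have hmono : StrictMonoOn (f c) (Ioc (0:ℝ) rd) := by
    apply strictMonoOn_of_deriv_pos (convex_Ioc _ _)
    · intro x hx
      have hx' : x ∈ Ioo (0:ℝ) 1 := ⟨hx.1, by nlinarith [hx.2, hrd.2]⟩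
      exact (hasDerivAt_f hc hx').continuousAt.continuousWithinAt
    · intro x hx
      rw [interior_Ioc] at hx
      have hx2 : x < 1/2 := lt_trans hx.2 hrd.2
      have hx' : x ∈ Ioo (0:ℝ) 1 := ⟨hx.1, by linarith⟩
      rw [(hasDerivAt_f hc hx').deriv]
      have hL : 0 < L c x := L_pos hc ⟨hx.1, hx2⟩
      have hg : 0 < g c x := by
        have := g_strictAntiOn hc ⟨hx.1, le_of_lt hx2⟩ ⟨hrd.1, le_of_lt hrd.2⟩ hx.2
        rw [hg0] at this; exact this
      positivity
  have hanti : StrictAntiOn (f c) (Icc rd (1/2)) := by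
    apply strictAntiOn_of_deriv_neg (convex_Icc _ _)
    · intro x hx
      have hx' : x ∈ Ioo (0:ℝ) 1 := ⟨lt_of_lt_of_le hrd.1 hx.1, by nlinarith [hx.2]⟩
      exact (hasDerivAt_f hc hx').continuousAt.continuousWithinAt
    · intro x hx
      rw [interior_Icc] at hx
      have hx0 : 0 < x := lt_trans hrd.1 hx.1
      have hx' : x ∈ Ioo (0:ℝ) 1 := ⟨hx0, by linarith [hx.2]⟩
      rw [(hasDerivAt_f hc hx').deriv]
      have hL : 0 < L c x := L_pos hc ⟨hx0, hx.2⟩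
      have hg : g c x < 0 := by
        have := g_strictAntiOn hc ⟨hrd.1, le_of_lt hrd.2⟩ ⟨hx0, le_of_lt hx.2⟩ hx.1
        rw [hg0] at this; exact this
      nlinarith
  intro r hr hne
  rcases lt_or_gt_of_ne hne with h | h
  · exact hmono ⟨hr.1, le_of_lt h⟩ ⟨hrd.1, le_refl _⟩ h
  · exact hanti ⟨le_refl _, le_of_lt hrd.2⟩ ⟨le_of_lt h, hr.2⟩ h

lemma root_unique (hc : 1 ≤ c) {rd r : ℝ} (hrd : rd ∈ Ioo (0:ℝ) (1/2))
    (hr : r ∈ Ioo (0:ℝ) (1/2)) (h1 : g c rd = 0) (h2 : g c r = 0) : r = rd := by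
  have := g_strictAntiOn hc
  rcases lt_trichotomy r rd with h | h | h
  · have := this ⟨hr.1, le_of_lt hr.2⟩ ⟨hrd.1, le_of_lt hrd.2⟩ h
    rw [h1, h2] at this; exact absurd this (lt_irrefl 0)
  · exact h
  · have := this ⟨hrd.1, le_of_lt hrd.2⟩ ⟨hr.1, le_of_lt hr.2⟩ h
    rw [h1, h2] at this; exact absurd this (lt_irrefl 0)

lemma f_pos (hc : 1 ≤ c) {r : ℝ} (hr : r ∈ Ioo (0:ℝ) (1/2)) : 0 < f c r := by
  have := L_pos hc hr
  have h1 : 0 < r := hr.1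
  have h2 : 0 < 1 - r := by have := hr.2; linarith
  rw [f]; positivity

end SVaux

namespace SVaux2

noncomputable def G (x : ℝ) : ℝ := x * (Real.log x) ^ 2
noncomputable def H (x : ℝ) : ℝ := x * Real.log x

variable {d : ℕ}

noncomputable def Sm (p : Fin d → ℝ) : ℝ := ∑ i, H (p i)
noncomputable def V (p : Fin d → ℝ) : ℝ := (∑ i, G (p i)) - (Sm p) ^ 2

lemma hasDerivAt_G {x : ℝ} (hx : x ≠ 0) :
    HasDerivAt G ((Real.log x) ^ 2 + 2 * Real.log x) x := by
  have := (hasDerivAt_id x).mul ((Real.hasDerivAt_log hx).pow 2)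
  refine this.congr_deriv ?_
  field_simp
  simp only [Pi.pow_apply, id_eq, Nat.cast_ofNat, Nat.reduceSub, pow_one]
  ring

lemma hasDerivAt_H {x : ℝ} (hx : x ≠ 0) :
    HasDerivAt H (Real.log x + 1) x := Real.hasDerivAt_mul_log hx

lemma continuous_H : Continuous H := Real.continuous_mul_log

lemma continuousOn_G : ContinuousOn G (Ici (0:ℝ)) := by
  have hcont : Continuous (fun x : ℝ => (2 * (Real.sqrt x * Real.log (Real.sqrt x))) ^ 2) := by
    have := Real.continuous_mul_log.comp Real.continuous_sqrt
    fun_prop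
  apply hcont.continuousOn.congr
  intro x hx
  rcases eq_or_lt_of_le (Set.mem_Ici.1 hx) with h | h
  · simp [G, ← h]
  · have hs : Real.sqrt x ^ 2 = x := Real.sq_sqrt h.le
    simp only [G]
    rw [Real.log_sqrt h.le]
    nlinarith [hs]

lemma sum_split (F : Fin d → ℝ) {i j : Fin d} (hij : i ≠ j) :
    ∑ k, F k = F i + F j + ∑ k ∈ ((Finset.univ.erase i).erase j), F k := by
  have hj : j ∈ Finset.univ.erase i := Finset.mem_erase.2 ⟨hij.symm, Finset.mem_univ j⟩
  rw [← Finset.add_sum_erase _ F (Finset.mem_univ i), ← Finset.add_sum_erase _ F hj]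
  ring

/-- two-coordinate perturbation -/
noncomputable def pt (p : Fin d → ℝ) (i j : Fin d) (ε : ℝ) : Fin d → ℝ :=
  fun k => if k = i then p i + ε else if k = j then p j - ε else p k

lemma pt_zero (p : Fin d → ℝ) (i j : Fin d) : pt p i j 0 = p := by
  funext k
  simp only [pt]
  split_ifs with h1 h2
  · subst h1; ring
  · subst h2; ring
  · rfl

lemma sum_pt_comp (p : Fin d → ℝ) {i j : Fin d} (hij : i ≠ j) (F : ℝ → ℝ) (ε : ℝ) :
    ∑ k, F (pt p i j ε k) =
      (∑ k, F (p k)) + (F (p i + ε) - F (p i)) + (F (p j - ε) - F (p j)) := by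
  rw [sum_split (fun k => F (pt p i j ε k)) hij, sum_split (fun k => F (p k)) hij]
  have h1 : ∑ k ∈ ((Finset.univ.erase i).erase j), F (pt p i j ε k)
      = ∑ k ∈ ((Finset.univ.erase i).erase j), F (p k) := by
    apply Finset.sum_congr rfl
    intro k hk
    have hk' := Finset.mem_erase.1 hk
    have hki := (Finset.mem_erase.1 hk'.2).1
    simp [pt, hki, hk'.1]
  have h2 : pt p i j ε i = p i + ε := by simp [pt]
  have h3 : pt p i j ε j = p j - ε := by simp [pt, hij.symm]
  rw [h1, h2, h3]
  ring

lemma sum_pt (p : Fin d → ℝ) {i j : Fin d} (hij : i ≠ j) (ε : ℝ) :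
    ∑ k, pt p i j ε k = ∑ k, p k := by
  have := sum_pt_comp p hij id ε
  simpa using this

lemma pt_mem (p : Fin d → ℝ) {i j : Fin d} (hij : i ≠ j)
    (hp : p ∈ stdSimplex ℝ (Fin d)) {ε : ℝ} (h1 : 0 ≤ p i + ε) (h2 : 0 ≤ p j - ε) :
    pt p i j ε ∈ stdSimplex ℝ (Fin d) := by
  refine ⟨?_, by rw [sum_pt p hij]; exact hp.2⟩
  intro k
  simp only [pt]
  split_ifs
  · exact h1
  · exact h2
  · exact hp.1 k

lemma V_pt (p : Fin d → ℝ) {i j : Fin d} (hij : i ≠ j) (ε : ℝ) :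
    V (pt p i j ε) = (∑ k, G (p k)) + (G (p i + ε) - G (p i)) + (G (p j - ε) - G (p j))
      - (Sm p + ((H (p i + ε) - H (p i)) + (H (p j - ε) - H (p j)))) ^ 2 := by
  rw [V, sum_pt_comp p hij G ε]
  have : Sm (pt p i j ε) = Sm p + ((H (p i + ε) - H (p i)) + (H (p j - ε) - H (p j))) := by
    rw [Sm, Sm, sum_pt_comp p hij H ε]; ring
  rw [this]

lemma hasDerivAt_comp_add {F : ℝ → ℝ} {x D : ℝ} (hF : HasDerivAt F D x) :
    HasDerivAt (fun ε => F (x + ε)) D 0 := by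
  have hin : HasDerivAt (fun ε : ℝ => x + ε) 1 0 := by
    simpa using (hasDerivAt_id (0:ℝ)).const_add x
  have hF' : HasDerivAt F D ((fun ε : ℝ => x + ε) 0) := by simpa using hF
  simpa [Function.comp_def] using HasDerivAt.comp (0:ℝ) hF' hin

lemma hasDerivAt_comp_sub {F : ℝ → ℝ} {x D : ℝ} (hF : HasDerivAt F D x) :
    HasDerivAt (fun ε => F (x - ε)) (-D) 0 := by
  have hin : HasDerivAt (fun ε : ℝ => x - ε) (-1) 0 := by
    simpa using (hasDerivAt_id (0:ℝ)).const_sub x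
  have hF' : HasDerivAt F D ((fun ε : ℝ => x - ε) 0) := by simpa using hF
  simpa [Function.comp_def] using HasDerivAt.comp (0:ℝ) hF' hin

lemma maximizer_stationary {p : Fin d → ℝ} (hmem : p ∈ stdSimplex ℝ (Fin d))
    (hmax : IsMaxOn V (stdSimplex ℝ (Fin d)) p) (hpos : ∀ k, 0 < p k)
    {i j : Fin d} (hij : i ≠ j) :
    (Real.log (p i)) ^ 2 + 2 * Real.log (p i) - 2 * Sm p * Real.log (p i)
      = (Real.log (p j)) ^ 2 + 2 * Real.log (p j) - 2 * Sm p * Real.log (p j) := by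
  set φ : ℝ → ℝ := fun ε => V (pt p i j ε) with hφ
  -- derivative of φ at 0
  have e1 : HasDerivAt (fun ε => G (p i + ε)) ((Real.log (p i)) ^ 2 + 2 * Real.log (p i)) 0 :=
    hasDerivAt_comp_add (hasDerivAt_G (ne_of_gt (hpos i)))
  have e2 : HasDerivAt (fun ε => G (p j - ε)) (-((Real.log (p j)) ^ 2 + 2 * Real.log (p j))) 0 :=
    hasDerivAt_comp_sub (hasDerivAt_G (ne_of_gt (hpos j)))
  have e3 : HasDerivAt (fun ε => H (p i + ε)) (Real.log (p i) + 1) 0 :=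
    hasDerivAt_comp_add (hasDerivAt_H (ne_of_gt (hpos i)))
  have e4 : HasDerivAt (fun ε => H (p j - ε)) (-(Real.log (p j) + 1)) 0 :=
    hasDerivAt_comp_sub (hasDerivAt_H (ne_of_gt (hpos j)))
  have eH : HasDerivAt
      (fun ε => Sm p + ((H (p i + ε) - H (p i)) + (H (p j - ε) - H (p j))))
      (Real.log (p i) - Real.log (p j)) 0 := by
    have := ((e3.sub_const (H (p i))).add (e4.sub_const (H (p j)))).const_add (Sm p)
    refine this.congr_deriv ?_
    ring
  have eSq : HasDerivAt
      (fun ε => (Sm p + ((H (p i + ε) - H (p i)) + (H (p j - ε) - H (p j)))) ^ 2)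
      (2 * Sm p * (Real.log (p i) - Real.log (p j))) 0 := by
    have := eH.fun_pow 2
    refine this.congr_deriv ?_
    have h0 : H (p i + 0) - H (p i) + (H (p j - 0) - H (p j)) = 0 := by norm_num
    rw [pow_one]
    rw [h0]
    ring
  have hD : HasDerivAt φ
      (((Real.log (p i)) ^ 2 + 2 * Real.log (p i)) - ((Real.log (p j)) ^ 2 + 2 * Real.log (p j))
        - 2 * Sm p * (Real.log (p i) - Real.log (p j))) 0 := by
    have hfun : φ = fun ε => ((∑ k, G (p k)) + (G (p i + ε) - G (p i)) + (G (p j - ε) - G (p j)))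
        - (Sm p + ((H (p i + ε) - H (p i)) + (H (p j - ε) - H (p j)))) ^ 2 := by
      funext ε
      show V (pt p i j ε) = _
      rw [V_pt p hij ε]
    rw [hfun]
    have := (((e1.sub_const (G (p i))).const_add (∑ k, G (p k))).add
      (e2.sub_const (G (p j)))).sub eSq
    refine this.congr_deriv ?_
    try ring
  -- local max
  have hloc : IsLocalMax φ 0 := by
    have hδ : (0:ℝ) < min (p i) (p j) := lt_min (hpos i) (hpos j)
    filter_upwards [Ioo_mem_nhds (by linarith : -(min (p i) (p j)) < 0) hδ] with ε hε
    have h1 : 0 ≤ p i + ε := by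
      have := hε.1; have := min_le_left (p i) (p j); linarith
    have h2 : 0 ≤ p j - ε := by
      have := hε.2; have := min_le_right (p i) (p j); linarith
    have hmem' := pt_mem p hij hmem h1 h2
    have := hmax hmem'
    simpa [hφ, pt_zero] using this
  have := hloc.hasDerivAt_eq_zero hD
  linarith

lemma slope_tendsto {F : ℝ → ℝ} {x D : ℝ} (hF : HasDerivAt F D x) :
    Tendsto (fun ε => (F (x - ε) - F x) / ε) (nhdsWithin 0 (Ioi 0)) (nhds (-D)) := by
  have h1 : HasDerivAt (fun ε => F (x - ε)) (-D) 0 := hasDerivAt_comp_sub hF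
  rw [hasDerivAt_iff_tendsto_slope] at h1
  have h2 := h1.mono_left (nhdsWithin_mono (0:ℝ) (fun y hy => ne_of_gt hy))
  apply h2.congr'
  filter_upwards [self_mem_nhdsWithin] with ε (hε : 0 < ε)
  rw [slope_def_field]
  norm_num

lemma maximizer_pos {p : Fin d → ℝ} (hmem : p ∈ stdSimplex ℝ (Fin d))
    (hmax : IsMaxOn V (stdSimplex ℝ (Fin d)) p) (k : Fin d) : 0 < p k := by
  rcases eq_or_lt_of_le (hmem.1 k) with hzero | h
  swap; · exact h
  exfalso
  set i := k
  have hi : p i = 0 := hzero.symm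
  -- find a positive coordinate
  have hjex : ∃ j, 0 < p j := by
    by_contra hcon
    push_neg at hcon
    have : ∑ l, p l = 0 := Finset.sum_eq_zero (fun l _ => le_antisymm (hcon l) (hmem.1 l))
    rw [hmem.2] at this
    norm_num at this
  obtain ⟨j, hj⟩ := hjex
  have hij : i ≠ j := by
    intro h'
    rw [← h', hi] at hj
    exact lt_irrefl 0 hj
  set S := Sm p with hS
  set h2 : ℝ → ℝ := fun ε => H (p j - ε) - H (p j) with hh2
  set g2 : ℝ → ℝ := fun ε => G (p j - ε) - G (p j) with hg2
  set dH : ℝ → ℝ := fun ε => H ε + h2 ε with hdH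
  have key : ∀ ε ∈ Ioi (0:ℝ), (V (pt p i j ε) - V p) / ε =
      Real.log ε * (Real.log ε - (2 * S + dH ε))
        + (g2 ε / ε - (h2 ε / ε) * (2 * S + dH ε)) := by
    intro ε (hε : 0 < ε)
    have hV : V p = (∑ l, G (p l)) - S ^ 2 := rfl
    rw [V_pt p hij ε, hV, hi]
    have hG0 : G (0:ℝ) = 0 := by simp [G]
    have hH0 : H (0:ℝ) = 0 := by simp [H]
    have hGε : G (0 + ε) = ε * (Real.log ε) ^ 2 := by simp [G]
    have hHε : H (0 + ε) = ε * Real.log ε := by simp [H]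
    rw [hG0, hH0, hGε, hHε, hdH, hh2, hg2]
    simp only [H, G]
    field_simp
    ring
  -- limits
  have t1 : Tendsto Real.log (nhdsWithin 0 (Ioi (0:ℝ))) atBot :=
    Real.tendsto_log_nhdsGT_zero
  have th2 : Tendsto (fun ε => h2 ε / ε) (nhdsWithin 0 (Ioi (0:ℝ)))
      (nhds (-(Real.log (p j) + 1))) := slope_tendsto (hasDerivAt_H (ne_of_gt hj))
  have tg2 : Tendsto (fun ε => g2 ε / ε) (nhdsWithin 0 (Ioi (0:ℝ)))
      (nhds (-((Real.log (p j)) ^ 2 + 2 * Real.log (p j)))) :=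
    slope_tendsto (hasDerivAt_G (ne_of_gt hj))
  have tdH : Tendsto dH (nhdsWithin 0 (Ioi (0:ℝ))) (nhds 0) := by
    have a1 : Tendsto H (nhds (0:ℝ)) (nhds 0) := by
      have := continuous_H.tendsto 0
      simpa [H] using this
    have a2 : Tendsto h2 (nhds (0:ℝ)) (nhds 0) := by
      have c1 : Continuous (fun ε : ℝ => H (p j - ε)) :=
        continuous_H.comp (continuous_const.sub continuous_id)
      have := (c1.tendsto 0).sub_const (H (p j))
      simpa [hh2] using this
    have := (a1.add a2).mono_left (nhdsWithin_le_nhds (s := Ioi (0:ℝ)))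
    simpa [hdH] using this
  have t2S : Tendsto (fun ε => 2 * S + dH ε) (nhdsWithin 0 (Ioi (0:ℝ))) (nhds (2 * S)) := by
    have := tdH.const_add (2 * S)
    simpa using this
  have tfirst : Tendsto (fun ε => Real.log ε - (2 * S + dH ε)) (nhdsWithin 0 (Ioi (0:ℝ)))
      atBot := by
    have := Tendsto.add_atBot (t2S.neg) t1
    apply this.congr
    intro ε; ring
  have tprod : Tendsto (fun ε => Real.log ε * (Real.log ε - (2 * S + dH ε)))
      (nhdsWithin 0 (Ioi (0:ℝ))) atTop := t1.atBot_mul_atBot₀ tfirst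
  have tsecond : Tendsto (fun ε => g2 ε / ε - (h2 ε / ε) * (2 * S + dH ε))
      (nhdsWithin 0 (Ioi (0:ℝ)))
      (nhds (-((Real.log (p j)) ^ 2 + 2 * Real.log (p j)) - (-(Real.log (p j) + 1)) * (2 * S))) :=
    tg2.sub (th2.mul t2S)
  have tall : Tendsto (fun ε => (V (pt p i j ε) - V p) / ε) (nhdsWithin 0 (Ioi (0:ℝ)))
      atTop := by
    have := Tendsto.add_atTop tsecond tprod
    have h' : Tendsto (fun ε => Real.log ε * (Real.log ε - (2 * S + dH ε))
        + (g2 ε / ε - (h2 ε / ε) * (2 * S + dH ε))) (nhdsWithin 0 (Ioi (0:ℝ))) atTop := by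
      apply this.congr
      intro ε; ring
    apply h'.congr'
    filter_upwards [self_mem_nhdsWithin] with ε hε
    exact (key ε hε).symm
  have hev1 := tall.eventually_gt_atTop 0
  have hev2 : ∀ᶠ ε in nhdsWithin 0 (Ioi (0:ℝ)), ε < p j :=
    eventually_nhdsWithin_of_eventually_nhds (tendsto_id.eventually_lt_const hj)
  have hev3 : ∀ᶠ ε in nhdsWithin 0 (Ioi (0:ℝ)), (0:ℝ) < ε := self_mem_nhdsWithin
  obtain ⟨ε, hD, hlt, hεpos⟩ := (hev1.and (hev2.and hev3)).exists
  have hmem' : pt p i j ε ∈ stdSimplex ℝ (Fin d) := by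
    apply pt_mem p hij hmem
    · rw [hi]; linarith
    · linarith
  have hle : V (pt p i j ε) ≤ V p := hmax hmem'
  have : (V (pt p i j ε) - V p) / ε ≤ 0 :=
    div_nonpos_of_nonpos_of_nonneg (by linarith) (le_of_lt hεpos)
  linarith

lemma continuousOn_V : ContinuousOn (V (d := d)) (stdSimplex ℝ (Fin d)) := by
  have hmem : ∀ (l : Fin d) (p : Fin d → ℝ), p ∈ stdSimplex ℝ (Fin d) → p l ∈ Ici (0:ℝ) :=
    fun l p hp => hp.1 l
  have hA : ContinuousOn (fun p : Fin d → ℝ => ∑ l, G (p l)) (stdSimplex ℝ (Fin d)) := by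
    apply continuousOn_finset_sum
    intro l _
    exact continuousOn_G.comp (continuous_apply l).continuousOn (fun p hp => hmem l p hp)
  have hB : Continuous (fun p : Fin d → ℝ => Sm p) := by
    apply continuous_finset_sum
    intro l _
    exact continuous_H.comp (continuous_apply l)
  exact hA.sub ((hB.pow 2).continuousOn)

lemma exists_maximizer (hd : 0 < d) :
    ∃ p ∈ stdSimplex ℝ (Fin d), IsMaxOn V (stdSimplex ℝ (Fin d)) p := by
  haveI : Nonempty (Fin d) := ⟨⟨0, hd⟩⟩
  exact (isCompact_stdSimplex ℝ (Fin d)).exists_isMaxOn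
    ⟨_, single_mem_stdSimplex ℝ (⟨0, hd⟩ : Fin d)⟩ continuousOn_V

/-- the candidate optimizer -/
noncomputable def qvec (d : ℕ) (r : ℝ) : Fin d → ℝ :=
  fun j => if (j : ℕ) = 0 then 1 - r else r / ((d:ℝ) - 1)

lemma sum_if_fin (hd : 2 ≤ d) (x y : ℝ) :
    ∑ j : Fin d, (if (j : ℕ) = 0 then x else y) = x + ((d:ℝ) - 1) * y := by
  haveI : NeZero d := ⟨by omega⟩
  have h1 : ∀ j : Fin d, ((j : ℕ) = 0) ↔ (j = 0) := by
    intro j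
    rw [Fin.ext_iff, Fin.val_zero]
  have h2 : ∀ j : Fin d, (if (j : ℕ) = 0 then x else y)
      = y + (if j = 0 then x - y else 0) := by
    intro j
    simp only [h1 j]
    split_ifs <;> ring
  rw [Finset.sum_congr rfl (fun j _ => h2 j), Finset.sum_add_distrib,
    Finset.sum_const, Finset.sum_ite_eq' Finset.univ (0 : Fin d) (fun _ => x - y)]
  simp only [Finset.mem_univ, if_true, Finset.card_univ, Fintype.card_fin, nsmul_eq_mul]
  ring

lemma qvec_mem (hd : 2 ≤ d) {r : ℝ} (hr : r ∈ Ioo (0:ℝ) (1/2)) :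
    qvec d r ∈ stdSimplex ℝ (Fin d) := by
  have hc : (1:ℝ) ≤ (d:ℝ) - 1 := by
    have : (2:ℝ) ≤ (d:ℝ) := by exact_mod_cast hd
    linarith
  constructor
  · intro j
    rw [qvec]
    split_ifs
    · linarith [hr.2]
    · have := hr.1; positivity
  · rw [show (∑ j, qvec d r j) = ∑ j : Fin d, (if (j : ℕ) = 0 then 1 - r else r / ((d:ℝ)-1))
      from rfl, sum_if_fin hd]
    field_simp
    ring

lemma V_qvec (hd : 2 ≤ d) {r : ℝ} (hr : r ∈ Ioo (0:ℝ) (1/2)) :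
    V (qvec d r) = SVaux.f ((d:ℝ) - 1) r := by
  have hc : (1:ℝ) ≤ (d:ℝ) - 1 := by
    have : (2:ℝ) ≤ (d:ℝ) := by exact_mod_cast hd
    linarith
  have hc0 : (0:ℝ) < (d:ℝ) - 1 := by linarith
  have h0 : 0 < r := hr.1
  have h1 : r < 1/2 := hr.2
  set c := (d:ℝ) - 1
  set α := Real.log (1 - r)
  set β := Real.log (r / c)
  have hβ : β = Real.log r - Real.log c := Real.log_div (ne_of_gt h0) (ne_of_gt hc0)
  have hL : SVaux.L c r = α - β := by
    rw [SVaux.L_eq hc0 ⟨h0, by linarith⟩, hβ]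
    ring
  have hA : ∑ j, G (qvec d r j) = (1 - r) * α ^ 2 + r * β ^ 2 := by
    have : ∀ j : Fin d, G (qvec d r j)
        = (if (j:ℕ) = 0 then G (1 - r) else G (r / c)) := by
      intro j; rw [qvec]; split_ifs <;> rfl
    rw [Finset.sum_congr rfl (fun j _ => this j), sum_if_fin hd]
    rw [G, G]
    have : c * (r / c * (Real.log (r/c))^2) = r * β ^ 2 := by
      field_simp
      rfl
    rw [this]
  have hS : Sm (qvec d r) = (1 - r) * α + r * β := by
    have : ∀ j : Fin d, H (qvec d r j)
        = (if (j:ℕ) = 0 then H (1 - r) else H (r / c)) := by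
      intro j; rw [qvec]; split_ifs <;> rfl
    rw [Sm, Finset.sum_congr rfl (fun j _ => this j), sum_if_fin hd]
    rw [H, H]
    have : c * (r / c * Real.log (r/c)) = r * β := by
      field_simp
      rfl
    rw [this]
  rw [V, hA, hS, SVaux.f, hL]
  ring

lemma V_comp_perm (p : Fin d → ℝ) (e : Equiv.Perm (Fin d)) :
    V (fun i => p (e i)) = V p := by
  rw [V, V, Sm, Sm]
  rw [Equiv.sum_comp e (fun k => G (p k)), Equiv.sum_comp e (fun k => H (p k))]

set_option maxHeartbeats 1000000 in
lemma classify (hd : 2 ≤ d) {rd : ℝ} (hrd : rd ∈ Ioo (0:ℝ) (1/2))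
    (hfmax : ∀ r ∈ Ioc (0:ℝ) (1/2), r ≠ rd →
      SVaux.f ((d:ℝ)-1) r < SVaux.f ((d:ℝ)-1) rd)
    {p : Fin d → ℝ} (hmem : p ∈ stdSimplex ℝ (Fin d))
    (hmax : IsMaxOn V (stdSimplex ℝ (Fin d)) p) :
    ∃ i1 : Fin d, p i1 = 1 - rd ∧ ∀ k, k ≠ i1 → p k = rd / ((d:ℝ)-1) := by
  have hdR : (2:ℝ) ≤ (d:ℝ) := by exact_mod_cast hd
  set c := (d:ℝ) - 1 with hcdef
  have hc : (1:ℝ) ≤ c := by rw [hcdef]; linarith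
  have hc0 : (0:ℝ) < c := by linarith
  have hpos : ∀ k, 0 < p k := maximizer_pos hmem hmax
  have hVlow : SVaux.f c rd ≤ V p := by
    have h2 : V (qvec d rd) ≤ V p := hmax (qvec_mem hd hrd)
    rw [V_qvec hd hrd] at h2
    exact h2
  have hfrdpos : 0 < SVaux.f c rd := SVaux.f_pos hc hrd
  obtain ⟨i1, -, hi1⟩ := Finset.exists_max_image Finset.univ p ⟨⟨0, by omega⟩, Finset.mem_univ _⟩
  set a := p i1 with ha
  set b0 := Real.exp (2 * Sm p - 2 - Real.log a) with hb0
  have hvals : ∀ k, p k = a ∨ p k = b0 := by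
    intro k
    by_cases hk : k = i1
    · left; rw [hk]
    · have hst := maximizer_stationary hmem hmax hpos hk
      have hfact : (Real.log (p k) - Real.log a) *
          (Real.log (p k) + Real.log a + 2 - 2 * Sm p) = 0 := by
        linear_combination hst
      rcases mul_eq_zero.1 hfact with h | h
      · left
        have hlog : Real.log (p k) = Real.log a := by linarith
        calc p k = Real.exp (Real.log (p k)) := (Real.exp_log (hpos k)).symm
        _ = Real.exp (Real.log a) := by rw [hlog]
        _ = a := Real.exp_log (hpos i1)
      · right
        have hlog : Real.log (p k) = 2 * Sm p - 2 - Real.log a := by linarith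
        rw [← Real.exp_log (hpos k), hlog, hb0]
  classical
  set T := Finset.univ.filter (fun k => p k ≠ a) with hT
  set m := T.card with hm
  have hi1T : i1 ∉ T := by simp [hT, ha]
  have hsub : T ⊆ Finset.univ.erase i1 := fun k hk =>
    Finset.mem_erase.2 ⟨fun h => hi1T (h ▸ hk), Finset.mem_univ k⟩
  have hmle : m ≤ d - 1 := by
    calc m ≤ (Finset.univ.erase i1).card := Finset.card_le_card hsub
    _ = d - 1 := by
        rw [Finset.card_erase_of_mem (Finset.mem_univ i1), Finset.card_univ, Fintype.card_fin]
  by_cases hTe : T = ∅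
  · exfalso
    have hall : ∀ k, p k = a := by
      intro k
      by_contra h
      have : k ∈ T := Finset.mem_filter.2 ⟨Finset.mem_univ k, h⟩
      rw [hTe] at this
      exact absurd this (Finset.notMem_empty k)
    have hda : (d:ℝ) * a = 1 := by
      have h2 := hmem.2
      rw [Finset.sum_congr rfl (fun k _ => hall k)] at h2
      simpa [Finset.sum_const, Finset.card_univ] using h2
    have hV0 : V p = 0 := by
      have hA : ∑ k, G (p k) = (d:ℝ) * G a := by
        rw [Finset.sum_congr rfl (fun k _ => by rw [hall k])]
        simp [Finset.sum_const, Finset.card_univ, mul_comm]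
      have hS : Sm p = (d:ℝ) * H a := by
        rw [Sm, Finset.sum_congr rfl (fun k _ => by rw [hall k])]
        simp [Finset.sum_const, Finset.card_univ, mul_comm]
      rw [V, hA, hS, G, H]
      linear_combination (-(d:ℝ)*a*(Real.log a)^2 - ((d:ℝ)*(a*Real.log a))^2/((d:ℝ)*a) * 0) * hda
    linarith
  · have hTne : T.Nonempty := Finset.nonempty_of_ne_empty hTe
    have hm1 : 1 ≤ m := Finset.card_pos.2 hTne
    obtain ⟨k0, hk0⟩ := hTne
    have hk0b : p k0 = b0 := (hvals k0).resolve_left (Finset.mem_filter.1 hk0).2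
    have hb0a : b0 < a :=
      lt_of_le_of_ne (hk0b ▸ hi1 k0 (Finset.mem_univ k0))
        (hk0b ▸ (Finset.mem_filter.1 hk0).2)
    have ha0 : 0 < a := hpos i1
    have hb00 : 0 < b0 := hk0b ▸ hpos k0
    have hTval : ∀ k ∈ T, p k = b0 := fun k hk =>
      (hvals k).resolve_left (Finset.mem_filter.1 hk).2
    have hTcval : ∀ k ∈ Finset.univ.filter (fun k => ¬ p k ≠ a), p k = a := by
      intro k hk
      have := (Finset.mem_filter.1 hk).2
      exact not_not.1 this
    set kk := d - m with hkk
    have hkk1 : 1 ≤ kk := by omega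
    have hkkcard : (Finset.univ.filter (fun k => ¬ p k ≠ a)).card = kk := by
      have h9 := Finset.card_filter_add_card_filter_not
        (s := (Finset.univ : Finset (Fin d))) (p := fun k => p k ≠ a)
      rw [Finset.card_univ, Fintype.card_fin, ← hT, ← hm] at h9
      omega
    have splitF : ∀ F : ℝ → ℝ, ∑ k, F (p k) = (m:ℝ) * F b0 + (kk:ℝ) * F a := by
      intro F
      have hsplit := Finset.sum_filter_add_sum_filter_not
        (Finset.univ : Finset (Fin d)) (fun k => p k ≠ a) (fun k => F (p k))
      rw [← hT] at hsplit
      have e1 : ∑ k ∈ T, F (p k) = (m:ℝ) * F b0 := by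
        rw [Finset.sum_congr rfl (fun k hk => by rw [hTval k hk]), Finset.sum_const, ← hm,
          nsmul_eq_mul]
      have e2 : ∑ k ∈ Finset.univ.filter (fun k => ¬ p k ≠ a), F (p k) = (kk:ℝ) * F a := by
        rw [Finset.sum_congr rfl (fun k hk => by rw [hTcval k hk]), Finset.sum_const, hkkcard,
          nsmul_eq_mul]
      rw [e1, e2] at hsplit
      linarith [hsplit]
    have hsum : (kk:ℝ) * a + (m:ℝ) * b0 = 1 := by
      have h10 := splitF (fun x => x)
      rw [hmem.2] at h10
      linarith [h10]
    set pp := (kk:ℝ) * a with hpp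
    set sg := (m:ℝ) * b0 with hsg
    have hkkR : (1:ℝ) ≤ (kk:ℝ) := by exact_mod_cast hkk1
    have hmR : (1:ℝ) ≤ (m:ℝ) := by exact_mod_cast hm1
    have hpppos : 0 < pp := by rw [hpp]; nlinarith
    have hsgpos : 0 < sg := by rw [hsg]; nlinarith
    have hppsg : pp + sg = 1 := hsum
    set la := Real.log a with hla
    set lb := Real.log b0 with hlb
    have hA : ∑ k, G (p k) = pp * la ^ 2 + sg * lb ^ 2 := by
      rw [splitF G]
      simp only [G]
      rw [hpp, hsg, hla, hlb]
      ring
    have hS : Sm p = pp * la + sg * lb := by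
      rw [Sm, splitF H]
      simp only [H]
      rw [hpp, hsg, hla, hlb]
      ring
    have hVp : V p = pp * sg * (la - lb) ^ 2 := by
      rw [V, hA, hS]
      linear_combination (-(pp * la ^ 2 + sg * lb ^ 2)) * hppsg
    have hlab : la - lb = Real.log (a / b0) := by
      rw [hla, hlb, Real.log_div (ne_of_gt ha0) (ne_of_gt hb00)]
    have hu1 : 1 < a / b0 := (one_lt_div hb00).2 hb0a
    have hlogu : 0 < la - lb := by rw [hlab]; exact Real.log_pos hu1
    have hmcast : (m:ℝ) ≤ c := by
      rw [hcdef]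
      have : (m:ℕ) ≤ d - 1 := hmle
      have h2 : ((d:ℕ) - 1 : ℕ) = ((d:ℝ) - 1 : ℝ) := by
        push_cast [Nat.cast_sub (by omega : 1 ≤ d)]
        ring
      calc (m:ℝ) ≤ ((d - 1 : ℕ) : ℝ) := by exact_mod_cast this
      _ = (d:ℝ) - 1 := h2
    have hmain : a / b0 ≤ pp / sg * c := by
      rw [div_mul_eq_mul_div, div_le_div_iff₀ hb00 hsgpos]
      have hmc : (m:ℝ) ≤ c * (kk:ℝ) := by
        calc (m:ℝ) ≤ c := hmcast
        _ = c * 1 := by ring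
        _ ≤ c * (kk:ℝ) := mul_le_mul_of_nonneg_left hkkR (le_of_lt hc0)
      calc a * sg = (m:ℝ) * (a * b0) := by rw [hsg]; ring
      _ ≤ (c * kk) * (a * b0) :=
          mul_le_mul_of_nonneg_right hmc (le_of_lt (mul_pos ha0 hb00))
      _ = pp * c * b0 := by rw [hpp]; ring
    have hu1' : 1 < pp / sg * c := lt_of_lt_of_le hu1 hmain
    have hVle : V p ≤ pp * sg * (Real.log (pp / sg * c)) ^ 2 := by
      rw [hVp]
      have h1 : la - lb ≤ Real.log (pp / sg * c) := by
        rw [hlab]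
        exact Real.log_le_log (by positivity) hmain
      have h2 : (la - lb) ^ 2 ≤ (Real.log (pp / sg * c)) ^ 2 :=
        pow_le_pow_left₀ (le_of_lt hlogu) h1 2
      exact mul_le_mul_of_nonneg_left h2 (le_of_lt (mul_pos hpppos hsgpos))
    rcases lt_or_ge sg (1/2) with hsghalf | hsghalf
    · have h1sg : 1 - sg = pp := by linarith
      have hfsg : pp * sg * (Real.log (pp / sg * c)) ^ 2 = SVaux.f c sg := by
        rw [SVaux.f, SVaux.L, h1sg]
        ring
      have hVle2 : V p ≤ SVaux.f c sg := by rw [← hfsg]; exact hVle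
      have hsgIoc : sg ∈ Ioc (0:ℝ) (1/2) := ⟨hsgpos, le_of_lt hsghalf⟩
      have hsgrd : sg = rd := by
        by_contra hne
        have hlt := hfmax sg hsgIoc hne
        linarith
      have hVle3 : V p ≤ SVaux.f c rd := by rw [← hsgrd]; exact hVle2
      have hVeq : V p = SVaux.f c rd := le_antisymm hVle3 hVlow
      have hloge : pp * sg * (la - lb) ^ 2 = pp * sg * (Real.log (pp / sg * c)) ^ 2 := by
        calc pp * sg * (la - lb) ^ 2 = V p := hVp.symm
        _ = SVaux.f c rd := hVeq
        _ = SVaux.f c sg := by rw [hsgrd]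
        _ = pp * sg * (Real.log (pp / sg * c)) ^ 2 := hfsg.symm
      have h3 : (la - lb) ^ 2 = (Real.log (pp / sg * c)) ^ 2 :=
        mul_left_cancel₀ (ne_of_gt (mul_pos hpppos hsgpos)) hloge
      have hlogeq : la - lb = Real.log (pp / sg * c) := by
        have h2 : 0 < Real.log (pp / sg * c) := Real.log_pos hu1'
        have h6 : (la - lb - Real.log (pp / sg * c)) * (la - lb + Real.log (pp / sg * c)) = 0 := by
          linear_combination h3
        rcases mul_eq_zero.1 h6 with h | h
        · linarith
        · exfalso; linarith
      have habe : a / b0 = pp / sg * c := by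
        have h5 : Real.log (a / b0) = Real.log (pp / sg * c) := by rw [← hlab, hlogeq]
        exact Real.log_injOn_pos (Set.mem_Ioi.2 (by positivity))
          (Set.mem_Ioi.2 (mul_pos (div_pos hpppos hsgpos) hc0)) h5
      have hmeq : (m:ℝ) = c * (kk:ℝ) := by
        have h7 : a * sg = pp * c * b0 := by
          rw [div_mul_eq_mul_div, div_eq_div_iff (ne_of_gt hb00) (ne_of_gt hsgpos)] at habe
          linarith
        have h8 : (m:ℝ) * (a * b0) = (c * (kk:ℝ)) * (a * b0) := by
          rw [hsg, hpp] at h7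
          linear_combination h7
        exact mul_right_cancel₀ (ne_of_gt (mul_pos ha0 hb00)) h8
      have hkkeq : kk = 1 := by
        by_contra hne
        have hkk2 : 2 ≤ kk := by omega
        have hkk2R : (2:ℝ) ≤ (kk:ℝ) := by exact_mod_cast hkk2
        have h9 : c * 2 ≤ c * (kk:ℝ) := mul_le_mul_of_nonneg_left hkk2R (le_of_lt hc0)
        linarith
      have hmeq' : (m:ℝ) = c := by
        rw [hmeq, hkkeq]; norm_num
      have haval : a = 1 - rd := by
        have : pp = a := by rw [hpp, hkkeq]; norm_num
        linarith [hppsg, hsgrd]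
      have hbval : b0 = rd / c := by
        have : sg = c * b0 := by rw [hsg, hmeq']
        rw [hsgrd] at this
        field_simp [ne_of_gt hc0]
        linarith
      refine ⟨i1, by rw [← ha, haval], ?_⟩
      intro k hk
      have hTeq : T = Finset.univ.erase i1 := by
        apply Finset.eq_of_subset_of_card_le hsub
        rw [Finset.card_erase_of_mem (Finset.mem_univ i1), Finset.card_univ, Fintype.card_fin]
        have : m = d - 1 := by omega
        omega
      have hkT : k ∈ T := by
        rw [hTeq]
        exact Finset.mem_erase.2 ⟨hk, Finset.mem_univ k⟩
      rw [hTval k hkT, hbval]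
    · exfalso
      have hpple : pp ≤ 1/2 := by linarith
      have hu1c : pp / sg * c ≤ c := by
        have hdiv : pp / sg ≤ 1 := (div_le_one hsgpos).2 (by linarith)
        nlinarith
      have hlogle : Real.log (pp / sg * c) ≤ Real.log c := Real.log_le_log (mul_pos (div_pos hpppos hsgpos) hc0) hu1c
      have hlogp : 0 < Real.log (pp / sg * c) := Real.log_pos hu1'
      have hVsmall : V p ≤ (1/4) * (Real.log c) ^ 2 := by
        have hppsgle : pp * sg ≤ 1/4 := by nlinarith [sq_nonneg (pp - sg)]
        have hsq : (Real.log (pp / sg * c)) ^ 2 ≤ (Real.log c) ^ 2 :=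
          pow_le_pow_left₀ (le_of_lt hlogp) hlogle 2
        calc V p ≤ pp * sg * (Real.log (pp / sg * c)) ^ 2 := hVle
        _ ≤ (1/4) * (Real.log (pp / sg * c)) ^ 2 :=
            mul_le_mul_of_nonneg_right hppsgle (by positivity)
        _ ≤ (1/4) * (Real.log c) ^ 2 := by linarith
      have hf12 : SVaux.f c (1/2) = (1/4) * (Real.log c) ^ 2 := by
        rw [SVaux.f, SVaux.L]
        norm_num
      have hflt : SVaux.f c (1/2) < SVaux.f c rd := by
        exact hfmax (1/2) ⟨by norm_num, le_refl _⟩ (ne_of_gt hrd.2)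
      linarith

lemma val_zero_iff {n : ℕ} [NeZero n] (x : Fin n) : (x : ℕ) = 0 ↔ x = 0 := by
  rw [Fin.ext_iff, Fin.val_zero]

lemma V_shape (hd : 2 ≤ d) {r : ℝ} {q : Fin d → ℝ} {j1 : Fin d}
    (h1 : q j1 = 1 - r) (h2 : ∀ k, k ≠ j1 → q k = r / ((d:ℝ)-1)) :
    V q = V (qvec d r) := by
  haveI : NeZero d := ⟨by omega⟩
  have hq : q = fun k => qvec d r (Equiv.swap j1 0 k) := by
    funext k
    by_cases hk : k = j1
    · subst hk
      rw [h1, Equiv.swap_apply_left, qvec]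
      simp [Fin.val_zero]
    · rw [h2 k hk, qvec]
      by_cases hk0 : k = 0
      · subst hk0
        rw [Equiv.swap_apply_right]
        have hj10 : j1 ≠ 0 := fun h => hk (by rw [h])
        have hv : ¬ ((j1 : ℕ) = 0) := fun h => hj10 ((val_zero_iff j1).1 h)
        simp [hv]
      · rw [Equiv.swap_apply_of_ne_of_ne hk hk0]
        have hv : ¬ ((k : ℕ) = 0) := fun h => hk0 ((val_zero_iff k).1 h)
        simp [hv]
  rw [hq]
  exact V_comp_perm (qvec d r) (Equiv.swap j1 0)

end SVaux2

/-- the unique maximizer `r_d` of `N(d)`, its characterizing equation, and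
the equality cases of the surprisal-variance bound. -/
theorem surprisal_variance_eq_iff (d : ℕ) (hd : 2 ≤ d) :
    ∃ rd : ℝ, rd ∈ Set.Ioo (0:ℝ) (1/2) ∧
      rd * (1 - rd) * (Real.log ((1 - rd) / rd * ((d:ℝ) - 1)))^2 = Nfun d ∧
      (∀ r ∈ Set.Ioo (0:ℝ) (1/2),
        r * (1 - r) * (Real.log ((1 - r) / r * ((d:ℝ) - 1)))^2 = Nfun d → r = rd) ∧
      (1 - 2 * rd) * Real.log ((1 - rd) / rd * ((d:ℝ) - 1)) = 2 ∧
      (∀ r ∈ Set.Ioo (0:ℝ) (1/2),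
        (1 - 2 * r) * Real.log ((1 - r) / r * ((d:ℝ) - 1)) = 2 → r = rd) ∧
      (∀ p : Fin d → ℝ, (∀ i, 0 ≤ p i) → ∑ i, p i = 1 →
        ((∑ i, p i * (Real.log (p i))^2 - (∑ i, p i * Real.log (p i))^2) = Nfun d ↔
          ∃ e : Equiv.Perm (Fin d), ∀ i,
            p i = if ((e i : Fin d) : ℕ) = 0 then 1 - rd else rd / ((d:ℝ) - 1))) := by
  haveI : NeZero d := ⟨by omega⟩
  have hc : (1:ℝ) ≤ (d:ℝ) - 1 := by
    have : (2:ℝ) ≤ (d:ℝ) := by exact_mod_cast hd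
    linarith
  obtain ⟨rd, hrd, hg0, hfmax⟩ := SVaux.f_max hc
  -- Nfun d = f c rd
  have hub : ∀ v ∈ {v : ℝ | ∃ r : ℝ, 0 < r ∧ r < 1/2 ∧
      v = r * (1 - r) * (Real.log ((1 - r) / r * ((d:ℝ) - 1)))^2},
      v ≤ SVaux.f ((d:ℝ)-1) rd := by
    rintro v ⟨r, h1, h2, rfl⟩
    show SVaux.f ((d:ℝ)-1) r ≤ SVaux.f ((d:ℝ)-1) rd
    rcases eq_or_ne r rd with h | h
    · rw [h]
    · exact le_of_lt (hfmax r ⟨h1, le_of_lt h2⟩ h)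
  have hmem : SVaux.f ((d:ℝ)-1) rd ∈ {v : ℝ | ∃ r : ℝ, 0 < r ∧ r < 1/2 ∧
      v = r * (1 - r) * (Real.log ((1 - r) / r * ((d:ℝ) - 1)))^2} :=
    ⟨rd, hrd.1, hrd.2, rfl⟩
  have hN : Nfun d = SVaux.f ((d:ℝ)-1) rd := by
    rw [Nfun]
    apply le_antisymm
    · exact csSup_le ⟨_, hmem⟩ hub
    · exact le_csSup ⟨_, hub⟩ hmem
  refine ⟨rd, hrd, ?_, ?_, ?_, ?_, ?_⟩
  · rw [hN]; rfl
  · intro r hr heq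
    have heq' : SVaux.f ((d:ℝ)-1) r = SVaux.f ((d:ℝ)-1) rd := by
      rw [← hN]; exact heq
    by_contra hne
    have := hfmax r ⟨hr.1, le_of_lt hr.2⟩ hne
    linarith
  · have h := hg0
    rw [SVaux.g, SVaux.L] at h
    linarith
  · intro r hr heq
    apply SVaux.root_unique hc hrd hr hg0
    rw [SVaux.g, SVaux.L]
    linarith
  · intro p hp0 hp1
    have hmemp : p ∈ stdSimplex ℝ (Fin d) := ⟨hp0, hp1⟩
    obtain ⟨p0, hmem0, hmax0⟩ := SVaux2.exists_maximizer (d := d) (by omega)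
    obtain ⟨i1, hi1a, hi1b⟩ := SVaux2.classify hd hrd hfmax hmem0 hmax0
    have hVmax : SVaux2.V p0 = SVaux.f ((d:ℝ)-1) rd := by
      rw [SVaux2.V_shape hd hi1a hi1b]
      exact SVaux2.V_qvec hd hrd
    constructor
    · intro hVp
      have hVp' : SVaux2.V p = Nfun d := hVp
      have hmaxp : IsMaxOn SVaux2.V (stdSimplex ℝ (Fin d)) p := by
        rw [isMaxOn_iff]
        intro x hx
        have h1 := hmax0 hx
        have h2 : SVaux2.V x ≤ SVaux2.V p0 := h1
        rw [hVp', hN]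
        linarith [hVmax]
      obtain ⟨j1, hj1a, hj1b⟩ := SVaux2.classify hd hrd hfmax hmemp hmaxp
      refine ⟨Equiv.swap j1 0, ?_⟩
      intro i
      by_cases hij : i = j1
      · subst hij
        rw [Equiv.swap_apply_left, if_pos (Fin.val_zero d)]
        exact hj1a
      · have hne0 : Equiv.swap j1 0 i ≠ 0 := by
          intro h
          exact hij ((Equiv.swap j1 0).injective
            (h.trans (Equiv.swap_apply_left j1 0).symm))
        have hvne : ¬ ((Equiv.swap j1 0 i : Fin d) : ℕ) = 0 :=
          fun h => hne0 ((SVaux2.val_zero_iff _).1 h)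
        rw [if_neg hvne]
        exact hj1b i hij
    · rintro ⟨e, he⟩
      show SVaux2.V p = Nfun d
      have hpq : p = fun i => SVaux2.qvec d rd (e i) := by
        funext i
        rw [he i]
        rfl
      have h3 : SVaux2.V p = SVaux2.V (SVaux2.qvec d rd) := by
        rw [hpq]
        exact SVaux2.V_comp_perm (SVaux2.qvec d rd) e
      rw [h3, SVaux2.V_qvec hd hrd, hN]

end
end

section
/- Let d ≥ 2 be an integer, let E : Fin d → ℝ (a Hamiltonian/energy function) and let T > 0. Define the Gibbs distribution p i = exp(-E i / T) / (∑ j, exp(-E j / T)). Then the heat capacity, equal to the rescaled energy variance (∑ i, p i · (E i)² - (∑ i, p i · E i)²) / T², is at most N(d), and in particular is strictly less than (1/4)·(log(d-1))² + 1. -/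
open scoped ENNReal BigOperators

noncomputable section

section HeatCapAux
open Real Set Finset

variable {d : ℕ}

lemma expB {g : ℝ} (hg : 0 < g) : g^2 * Real.exp g < (Real.exp g - 1)^2 := by
  have h := (Real.self_lt_sinh_iff (x := g/2)).2 (by linarith)
  rw [Real.sinh_eq] at h
  have ha0 : 0 < Real.exp (g/2) := Real.exp_pos _
  have ha1 : 1 < Real.exp (g/2) := by
    rw [show (1:ℝ) = Real.exp 0 by simp]; exact Real.exp_lt_exp.mpr (by linarith)
  set a := Real.exp (g/2) with ha
  have hneg : Real.exp (-(g/2)) = a⁻¹ := by rw [Real.exp_neg]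
  rw [hneg] at h
  have hexpg : Real.exp g = a^2 := by
    rw [ha, sq, ← Real.exp_add]; ring_nf
  -- h : g/2 < (a - a⁻¹)/2, so g < a - a⁻¹, so g*a < a² - 1
  have hga : g * a < a^2 - 1 := by
    have : g < a - a⁻¹ := by linarith
    have h2 : g * a < (a - a⁻¹) * a := by
      exact mul_lt_mul_of_pos_right this ha0
    have h3 : (a - a⁻¹) * a = a^2 - 1 := by field_simp
    linarith
  have hgapos : 0 < g * a := mul_pos hg ha0
  rw [hexpg]
  nlinarith [sq_nonneg (a^2 - 1 - g*a)]

-- claim B: g² r(1-r) < (1-2r)² for r ∈ (0,1/2), g = log((1-r)/r)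
lemma claimB {r : ℝ} (h0 : 0 < r) (h2 : r < 1/2) :
    (Real.log ((1-r)/r))^2 * (r*(1-r)) < (1-2*r)^2 := by
  have hr1 : (1:ℝ) < (1-r)/r := (one_lt_div h0).mpr (by linarith)
  have hg : 0 < Real.log ((1-r)/r) := Real.log_pos hr1
  have he : Real.exp (Real.log ((1-r)/r)) = (1-r)/r := Real.exp_log (by linarith)
  have hB := expB hg
  rw [he] at hB
  set g := Real.log ((1-r)/r)
  have h1 : (1-r)/r - 1 = (1-2*r)/r := by field_simp; ring
  rw [h1] at hB
  have h3 : g^2 * ((1-r)/r) * r^2 < ((1-2*r)/r)^2 * r^2 :=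
    mul_lt_mul_of_pos_right hB (by positivity)
  have h4 : ((1-2*r)/r)^2 * r^2 = (1-2*r)^2 := by field_simp
  have h5 : g^2 * ((1-r)/r) * r^2 = g^2 * (r*(1-r)) := by field_simp
  linarith

-- pointwise lemma
lemma pointwise {L r : ℝ} (h0 : 0 < r) (h2 : r < 1/2) :
    r * (1-r) * (Real.log ((1-r)/r) + L)^2 < L^2/4 + 1 := by
  have hB := claimB h0 h2
  set g := Real.log ((1-r)/r)
  have hrho : 0 < 1 - 4*(r*(1-r)) := by nlinarith [sq_nonneg (1-2*r)]
  nlinarith [sq_nonneg ((1-4*(r*(1-r)))*L - 4*g*(r*(1-r))), sq_nonneg (1-2*r), mul_pos h0 (show (0:ℝ) < 1-r by linarith)]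

lemma hd1 (hd : 2 ≤ d) : (1:ℝ) ≤ (d:ℝ) - 1 := by
  have : (2:ℝ) ≤ (d:ℝ) := by exact_mod_cast hd
  linarith

lemma logsplit (hd : 2 ≤ d) {r : ℝ} (h0 : 0 < r) (h2 : r < 1) :
    Real.log ((1 - r) / r * ((d:ℝ) - 1)) =
      Real.log ((1-r)/r) + Real.log ((d:ℝ)-1) := by
  have h3 : (0:ℝ) < (1-r)/r := div_pos (by linarith) h0
  rw [Real.log_mul (ne_of_gt h3) (by nlinarith [hd1 hd])]

lemma Npt_lt (hd : 2 ≤ d) {r : ℝ} (h0 : 0 < r) (h2 : r < 1/2) :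
    r * (1 - r) * (Real.log ((1 - r) / r * ((d:ℝ) - 1)))^2
      < (Real.log ((d:ℝ)-1))^2/4 + 1 := by
  rw [logsplit hd h0 (by linarith)]
  exact pointwise h0 h2

lemma Nbdd (hd : 2 ≤ d) : BddAbove {v : ℝ | ∃ r : ℝ, 0 < r ∧ r < 1/2 ∧
    v = r * (1 - r) * (Real.log ((1 - r) / r * ((d:ℝ) - 1)))^2} := by
  refine ⟨(Real.log ((d:ℝ)-1))^2/4 + 1, ?_⟩
  rintro v ⟨r, h0, h2, rfl⟩
  exact (Npt_lt hd h0 h2).le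

lemma Nmem (hd : 2 ≤ d) {r : ℝ} (h0 : 0 < r) (h2 : r < 1/2) :
    r * (1 - r) * (Real.log ((1 - r) / r * ((d:ℝ) - 1)))^2 ≤ Nfun d :=
  le_csSup (Nbdd hd) ⟨r, h0, h2, rfl⟩

lemma N_nonneg (hd : 2 ≤ d) : 0 ≤ Nfun d := by
  refine le_trans ?_ (Nmem hd (r := 1/4) (by norm_num) (by norm_num))
  positivity

lemma quarter_le_N (hd : 2 ≤ d) : (Real.log ((d:ℝ)-1))^2/4 ≤ Nfun d := by
  set L := Real.log ((d:ℝ)-1)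
  have hcont : Filter.Tendsto (fun r : ℝ => r * (1 - r) * (Real.log ((1 - r) / r * ((d:ℝ) - 1)))^2)
      (nhdsWithin (1/2) (Set.Iio (1/2))) (nhds (L^2/4)) := by
    have h1 : Filter.Tendsto (fun r : ℝ => r * (1 - r) * (Real.log ((1 - r) / r * ((d:ℝ) - 1)))^2)
        (nhds (1/2)) (nhds ((1/2) * (1 - 1/2) * (Real.log ((1 - 1/2) / (1/2) * ((d:ℝ) - 1)))^2)) := by
      apply ContinuousAt.tendsto
      have hdd := hd1 hd
      fun_prop (disch := norm_num <;> nlinarith [hdd])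
    have h2 : (1/2 : ℝ) * (1 - 1/2) * (Real.log ((1 - 1/2) / (1/2) * ((d:ℝ) - 1)))^2 = L^2/4 := by
      norm_num [L]; ring
    rw [h2] at h1
    exact h1.mono_left nhdsWithin_le_nhds
  refine le_of_tendsto hcont ?_
  filter_upwards [Ioo_mem_nhdsLT (show (1/4 : ℝ) < 1/2 by norm_num), self_mem_nhdsWithin] with r hr hr2
  exact Nmem hd (by linarith [hr.1]) hr2

-- crude bound for tiny r
lemma crude (hd : 2 ≤ d) {r : ℝ} (h0 : 0 < r)
    (hc : r ≤ Real.exp (-(Real.log ((d:ℝ)-1) + 8)^2)) :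
    r * (1 - r) * (Real.log ((1 - r) / r * ((d:ℝ) - 1)))^2 ≤ 1/4 := by
  obtain ⟨L, hLdef⟩ : ∃ L, L = Real.log ((d:ℝ)-1) := ⟨_, rfl⟩
  rw [← hLdef] at hc
  have hL : 0 ≤ L := hLdef ▸ Real.log_nonneg (hd1 hd)
  obtain ⟨y, hy⟩ : ∃ y, y = -Real.log r := ⟨_, rfl⟩
  have hylb : (L+8)^2 ≤ y := by
    have := Real.log_le_log h0 hc
    rw [Real.log_exp] at this
    rw [hy]; linarith
  have hy64 : 64 ≤ y := by nlinarith
  have hr2 : r < 1/2 := by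
    have : r ≤ Real.exp (-(L+8)^2) := hc
    have h64 : Real.exp (-(L+8)^2) ≤ Real.exp (-64) := Real.exp_le_exp.mpr (by nlinarith)
    have : Real.exp (-(64:ℝ)) < 1/2 := by
      rw [Real.exp_neg]
      rw [inv_lt_comm₀ (Real.exp_pos _) (by norm_num)]
      have h65 : (64:ℝ) + 1 ≤ Real.exp 64 := Real.add_one_le_exp (64:ℝ)
      norm_num at h65 ⊢
      linarith
    linarith
  have h1r : (0:ℝ) < 1 - r := by linarith
  -- bound the log
  have hargpos : (0:ℝ) < (1 - r) / r * ((d:ℝ) - 1) := by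
    have := hd1 hd
    have : (0:ℝ) < (1-r)/r := div_pos h1r h0
    nlinarith [hd1 hd]
  have hlogle : Real.log ((1 - r) / r * ((d:ℝ) - 1)) ≤ L + y := by
    rw [logsplit hd h0 (by linarith)]
    have : Real.log ((1-r)/r) ≤ -Real.log r := by
      rw [Real.log_div (by linarith) (ne_of_gt h0)]
      have : Real.log (1-r) ≤ 0 := Real.log_nonpos (by linarith) (by linarith)
      linarith
    rw [hy]; linarith
  have hlogpos : 0 ≤ Real.log ((1 - r) / r * ((d:ℝ) - 1)) := by
    apply Real.log_nonneg
    have h3 : (1:ℝ) ≤ (1-r)/r := by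
      rw [le_div_iff₀ h0]; linarith
    nlinarith [hd1 hd]
  have hLy : L + y ≤ 2*y := by nlinarith
  have hsq : (Real.log ((1 - r) / r * ((d:ℝ) - 1)))^2 ≤ (2*y)^2 := by
    apply sq_le_sq' <;> nlinarith
  -- r ≤ exp(-y), exp(-y) ≤ 256/y^4
  have hrexp : r = Real.exp (-y) := by
    rw [hy, neg_neg, Real.exp_log h0]
  have hexpy : (y/4)^4 ≤ Real.exp y := by
    have h14 : 1 + y/4 ≤ Real.exp (y/4) := by have := Real.add_one_le_exp (y/4); linarith
    have hq : Real.exp (y/4) ^ 4 = Real.exp y := by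
      rw [← Real.exp_nat_mul]; ring_nf
    calc (y/4)^4 ≤ Real.exp (y/4) ^ 4 := by
          apply pow_le_pow_left₀ (by linarith) (by linarith)
    _ = Real.exp y := hq
  have hexpneg : Real.exp (-y) ≤ 256/y^4 := by
    rw [Real.exp_neg, inv_le_iff_one_le_mul₀' (Real.exp_pos _)]
    have hy4 : (0:ℝ) < y^4 := by positivity
    rw [show Real.exp y * (256 / y^4) = Real.exp y * 256 / y^4 by ring, le_div_iff₀ hy4]
    have hring : (y/4)^4 * 256 = y^4 := by ring
    linarith
  calc r * (1 - r) * (Real.log ((1 - r) / r * ((d:ℝ) - 1)))^2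
      ≤ r * 1 * (2*y)^2 := by
        apply mul_le_mul (by nlinarith) hsq (by positivity) (by positivity)
  _ = r * (4*y^2) := by ring
  _ ≤ (256/y^4) * (4*y^2) := by
        apply mul_le_mul_of_nonneg_right _ (by positivity)
        rw [hrexp]; exact hexpneg
  _ = 1024 / y^2 := by field_simp; ring
  _ ≤ 1024 / 64^2 := by
        apply div_le_div_of_nonneg_left (by norm_num) (by positivity) (by nlinarith)
  _ = 1/4 := by norm_num

lemma Nfun_lt (hd : 2 ≤ d) : Nfun d < (1/4) * (Real.log ((d:ℝ) - 1))^2 + 1 := by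
  have hL : 0 ≤ Real.log ((d:ℝ)-1) := Real.log_nonneg (hd1 hd)
  set L := Real.log ((d:ℝ)-1) with hLdef
  set c := Real.exp (-(L + 8)^2) with hcdef
  have hc0 : 0 < c := Real.exp_pos _
  have hc2 : c < 1/2 := by
    have h64 : Real.exp (-(L+8)^2) ≤ Real.exp (-64) := Real.exp_le_exp.mpr (by nlinarith)
    have he : Real.exp (-(64:ℝ)) < 1/2 := by
      rw [Real.exp_neg]
      rw [inv_lt_comm₀ (Real.exp_pos _) (by norm_num)]
      have h65 : (64:ℝ) + 1 ≤ Real.exp 64 := Real.add_one_le_exp (64:ℝ)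
      norm_num at h65 ⊢
      linarith
    rw [hcdef]; linarith
  -- continuity on [c, 1/2]
  set f : ℝ → ℝ := fun r => r * (1 - r) * (Real.log ((1 - r) / r * ((d:ℝ) - 1)))^2 with hf
  have hcont : ContinuousOn f (Set.Icc c (1/2)) := by
    intro x hx
    apply ContinuousAt.continuousWithinAt
    obtain ⟨hx1, hx2⟩ := hx
    have hx0 : 0 < x := lt_of_lt_of_le hc0 hx1
    have hxne : x ≠ 0 := ne_of_gt hx0
    have hargne : (1 - x)/x * ((d:ℝ)-1) ≠ 0 := by
      have h1 : (0:ℝ) < (1-x)/x := div_pos (by linarith) hx0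
      have h2 := hd1 hd
      positivity
    fun_prop (disch := assumption)
  obtain ⟨r₀, hr₀mem, hr₀max⟩ :=
    (isCompact_Icc (a := c) (b := (1:ℝ)/2)).exists_isMaxOn ⟨c, by constructor <;> linarith⟩ hcont
  have hM : f r₀ < L^2/4 + 1 := by
    rcases lt_or_eq_of_le hr₀mem.2 with h | h
    · exact Npt_lt hd (lt_of_lt_of_le hc0 hr₀mem.1) h
    · rw [hf]
      simp only [h]
      have : ((1:ℝ) - 1/2) / (1/2) * ((d:ℝ)-1) = (d:ℝ)-1 := by norm_num
      rw [this, ← hLdef]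
      nlinarith [sq_nonneg L]
  have hub : ∀ v ∈ {v : ℝ | ∃ r : ℝ, 0 < r ∧ r < 1/2 ∧
      v = r * (1 - r) * (Real.log ((1 - r) / r * ((d:ℝ) - 1)))^2}, v ≤ max (f r₀) (1/4) := by
    rintro v ⟨r, h0, h2, rfl⟩
    rcases le_or_gt r c with h | h
    · exact le_max_of_le_right (crude hd h0 (hcdef ▸ h))
    · refine le_max_of_le_left (hr₀max ?_)
      exact ⟨h.le, h2.le⟩
  have hne : ∃ v, v ∈ {v : ℝ | ∃ r : ℝ, 0 < r ∧ r < 1/2 ∧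
      v = r * (1 - r) * (Real.log ((1 - r) / r * ((d:ℝ) - 1)))^2} :=
    ⟨(1/4 : ℝ) * (1 - 1/4) * (Real.log ((1 - 1/4) / (1/4) * ((d:ℝ) - 1)))^2,
      1/4, by norm_num, by norm_num, rfl⟩
  have hsup := csSup_le hne hub
  have hmax : max (f r₀) (1/4) < (1/4) * L^2 + 1 := by
    apply max_lt
    · nlinarith [hM]
    · nlinarith [sq_nonneg L]
  calc Nfun d ≤ max (f r₀) (1/4) := hsup
  _ < (1/4) * L^2 + 1 := hmax

def psiF (x : ℝ) : ℝ := x * Real.log x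
def Gf (x : ℝ) : ℝ := x * (Real.log x)^2
def Hf (x : ℝ) : ℝ := (2 * (Real.sqrt x * Real.log (Real.sqrt x)))^2

lemma Hf_eq {x : ℝ} (hx : 0 ≤ x) : Hf x = Gf x := by
  unfold Hf Gf
  rw [Real.log_sqrt hx]
  have : (Real.sqrt x)^2 = x := Real.sq_sqrt hx
  ring_nf
  nlinarith [Real.sq_sqrt hx]

lemma Hf_cont : Continuous Hf := by
  have h : Continuous fun y : ℝ => y * Real.log y := Real.continuous_mul_log
  have h2 : Continuous fun x : ℝ => Real.sqrt x * Real.log (Real.sqrt x) :=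
    h.comp Real.continuous_sqrt
  unfold Hf
  continuity

lemma psiF_cont : Continuous psiF := Real.continuous_mul_log

def Fv {d : ℕ} (q : Fin d → ℝ) : ℝ := (∑ i, Gf (q i)) - (∑ i, psiF (q i))^2
def Fv' {d : ℕ} (q : Fin d → ℝ) : ℝ := (∑ i, Hf (q i)) - (∑ i, psiF (q i))^2

lemma Fv'_cont {d : ℕ} : Continuous (Fv' (d := d)) := by
  unfold Fv'
  apply Continuous.sub
  · exact continuous_finset_sum _ (fun i _ => Hf_cont.comp (continuous_apply i))
  · exact (continuous_finset_sum _ (fun i _ => psiF_cont.comp (continuous_apply i))).pow 2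

lemma Fv_eq_Fv' {d : ℕ} {q : Fin d → ℝ} (hq : ∀ i, 0 ≤ q i) : Fv q = Fv' q := by
  unfold Fv Fv'
  congr 1
  exact Finset.sum_congr rfl (fun i _ => (Hf_eq (hq i)).symm)

lemma Gf_hasDeriv {x : ℝ} (hx : 0 < x) :
    HasDerivAt (fun t : ℝ => Gf (x + t)) ((Real.log x)^2 + 2 * Real.log x) 0 := by
  have l1 : HasDerivAt (fun t : ℝ => x + t) 1 0 := by
    simpa using (hasDerivAt_id (0:ℝ)).const_add x
  have l2 : HasDerivAt (fun t : ℝ => Real.log (x + t)) (1/x) 0 := by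
    have := l1.log (by simpa using hx.ne')
    simpa using this
  have l3 : HasDerivAt (fun t : ℝ => (Real.log (x + t))^2) (2 * Real.log x * (1/x)) 0 := by
    have := l2.fun_pow 2
    simpa using this
  have l4 := l1.fun_mul l3
  have : HasDerivAt (fun t : ℝ => (x + t) * (Real.log (x + t))^2)
      (1 * (Real.log x)^2 + (x + 0) * (2 * Real.log x * (1/x))) 0 := by
    simpa using l4
  convert this using 1
  · rfl
  field_simp
  try ring

lemma Gf_hasDeriv' {x : ℝ} (hx : 0 < x) :
    HasDerivAt (fun t : ℝ => Gf (x - t)) (-((Real.log x)^2 + 2 * Real.log x)) 0 := by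
  have l1 : HasDerivAt (fun t : ℝ => x - t) (-1) 0 := by
    simpa using (hasDerivAt_id (0:ℝ)).const_sub x
  have l2 : HasDerivAt (fun t : ℝ => Real.log (x - t)) (-1/x) 0 := by
    have := l1.log (by simpa using hx.ne')
    simpa using this
  have l3 : HasDerivAt (fun t : ℝ => (Real.log (x - t))^2) (2 * Real.log x * (-1/x)) 0 := by
    have := l2.fun_pow 2
    simpa using this
  have l4 := l1.fun_mul l3
  have : HasDerivAt (fun t : ℝ => (x - t) * (Real.log (x - t))^2)
      ((-1) * (Real.log x)^2 + (x - 0) * (2 * Real.log x * (-1/x))) 0 := by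
    simpa using l4
  convert this using 1
  · rfl
  field_simp
  try ring

lemma psiF_hasDeriv {x : ℝ} (hx : 0 < x) :
    HasDerivAt (fun t : ℝ => psiF (x + t)) (Real.log x + 1) 0 := by
  have l1 : HasDerivAt (fun t : ℝ => x + t) 1 0 := by
    simpa using (hasDerivAt_id (0:ℝ)).const_add x
  have l2 : HasDerivAt (fun t : ℝ => Real.log (x + t)) (1/x) 0 := by
    have := l1.log (by simpa using hx.ne')
    simpa using this
  have l4 := l1.fun_mul l2
  have : HasDerivAt (fun t : ℝ => (x + t) * Real.log (x + t))
      (1 * Real.log x + (x + 0) * (1/x)) 0 := by simpa using l4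
  convert this using 1
  · rfl
  field_simp
  ring

lemma psiF_hasDeriv' {x : ℝ} (hx : 0 < x) :
    HasDerivAt (fun t : ℝ => psiF (x - t)) (-(Real.log x + 1)) 0 := by
  have l1 : HasDerivAt (fun t : ℝ => x - t) (-1) 0 := by
    simpa using (hasDerivAt_id (0:ℝ)).const_sub x
  have l2 : HasDerivAt (fun t : ℝ => Real.log (x - t)) (-1/x) 0 := by
    have := l1.log (by simpa using hx.ne')
    simpa using this
  have l4 := l1.fun_mul l2
  have : HasDerivAt (fun t : ℝ => (x - t) * Real.log (x - t))
      ((-1) * Real.log x + (x - 0) * (-1/x)) 0 := by simpa using l4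
  convert this using 1
  · rfl
  field_simp
  try ring

lemma FO {d : ℕ} (m : Fin d → ℝ) (hm : m ∈ stdSimplex ℝ (Fin d))
    (hmax : IsMaxOn Fv' (stdSimplex ℝ (Fin d)) m) {i j : Fin d} (hij : i ≠ j)
    (hi : 0 < m i) (hj : 0 < m j) :
    (Real.log (m i) - Real.log (m j)) *
      (Real.log (m i) + Real.log (m j) + 2 - 2 * (∑ k, psiF (m k))) = 0 := by
  classical
  set δ := min (m i) (m j) with hδ
  have hδ0 : 0 < δ := lt_min hi hj
  set pert : ℝ → (Fin d → ℝ) := fun t k => if k = i then m i + t else if k = j then m j - t else m k with hpert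
  set S2 := (Finset.univ.erase i).erase j with hS2
  have hjmem : j ∈ Finset.univ.erase i := Finset.mem_erase.mpr ⟨hij.symm, Finset.mem_univ j⟩
  -- sum splitting
  have hsum : ∀ (f : ℝ → ℝ) (t : ℝ), ∑ k, f (pert t k)
      = f (m i + t) + (f (m j - t) + ∑ k ∈ S2, f (m k)) := by
    intro f t
    rw [← Finset.add_sum_erase _ _ (Finset.mem_univ i)]
    rw [← Finset.add_sum_erase _ _ hjmem]
    have e1 : pert t i = m i + t := by simp [hpert]
    have e2 : pert t j = m j - t := by simp [hpert, hij.symm]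
    rw [e1, e2, ← hS2]
    congr 1
    congr 1
    apply Finset.sum_congr rfl
    intro k hk
    have hkj : k ≠ j := Finset.ne_of_mem_erase hk
    have hki : k ≠ i := Finset.ne_of_mem_erase (Finset.mem_of_mem_erase hk)
    simp [hpert, hki, hkj]
  have hpert0 : pert 0 = m := by
    funext k; by_cases hki : k = i
    · simp [hpert, hki]
    · by_cases hkj : k = j
      · simp [hpert, hki, hkj, Ne.symm hij]
      · simp [hpert, hki, hkj]
  have hδi : δ ≤ m i := min_le_left _ _
  have hδj : δ ≤ m j := min_le_right _ _
  have hmemb : ∀ t : ℝ, |t| ≤ δ → pert t ∈ stdSimplex ℝ (Fin d) := by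
    intro t ht
    rw [abs_le] at ht
    constructor
    · intro k
      by_cases hki : k = i
      · have : pert t k = m i + t := by simp [hpert, hki]
        rw [this]; linarith [ht.1]
      · by_cases hkj : k = j
        · have : pert t k = m j - t := by simp [hpert, hki, hkj, Ne.symm hij]
          rw [this]; linarith [ht.2]
        · have : pert t k = m k := by simp [hpert, hki, hkj]
          rw [this]; exact hm.1 k
    · have h1 := hsum id t
      have h2 := hsum id 0
      simp only [id] at h1 h2
      have h3 : ∑ k, pert 0 k = 1 := by rw [hpert0]; exact hm.2
      rw [h3] at h2
      linarith [h1, h2]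
  -- 1-d function
  set B2 : ℝ := ∑ k ∈ S2, Hf (m k) with hB2
  set C2 : ℝ := ∑ k ∈ S2, psiF (m k) with hC2
  set g : ℝ → ℝ := fun t => (Gf (m i + t) + (Gf (m j - t) + B2))
      - (psiF (m i + t) + (psiF (m j - t) + C2))^2 with hg
  have hgeq : ∀ t : ℝ, |t| ≤ δ → g t = Fv' (pert t) := by
    intro t ht
    rw [abs_le] at ht
    show (Gf (m i + t) + (Gf (m j - t) + B2)) - (psiF (m i + t) + (psiF (m j - t) + C2))^2 = _
    unfold Fv'
    rw [hsum Hf t, hsum psiF t]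
    have e1 : Hf (m i + t) = Gf (m i + t) := Hf_eq (by linarith [ht.1])
    have e2 : Hf (m j - t) = Gf (m j - t) := Hf_eq (by linarith [ht.2])
    rw [e1, e2]
  have hloc : IsLocalMax g 0 := by
    have hIcc : Set.Icc (-δ) δ ∈ nhds (0:ℝ) := Icc_mem_nhds (by linarith) (by linarith)
    filter_upwards [hIcc] with t ht
    have habs : |t| ≤ δ := by rw [abs_le]; exact ht
    rw [hgeq t habs, hgeq 0 (by simpa using hδ0.le)]
    rw [hpert0]
    exact hmax (hmemb t habs)
  -- derivative of g at 0
  set yi := Real.log (m i) with hyi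
  set yj := Real.log (m j) with hyj
  set μ' : ℝ := psiF (m i) + (psiF (m j) + C2) with hμ'
  have hgd : HasDerivAt g
      ((yi^2 + 2*yi + (-(yj^2 + 2*yj))) - 2 * μ'^1 * ((yi + 1) + (-(yj + 1)))) 0 := by
    have hA := (Gf_hasDeriv hi).fun_add ((Gf_hasDeriv' hj).add_const B2)
    have hP := (psiF_hasDeriv hi).fun_add ((psiF_hasDeriv' hj).add_const C2)
    have hPsq := hP.fun_pow 2
    have hcomb := hA.fun_sub hPsq
    have e0 : (fun t : ℝ => (Gf (m i + t) + (Gf (m j - t) + B2))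
        - (psiF (m i + t) + (psiF (m j - t) + C2))^2) = g := rfl
    rw [e0] at hcomb
    refine hcomb.congr_deriv ?_
    simp [hμ', hyi, hyj]
    try ring
  have hD := hloc.deriv_eq_zero
  rw [hgd.deriv] at hD
  have hμeq : ∑ k, psiF (m k) = μ' := by
    have := hsum psiF 0
    rw [hpert0] at this
    simpa [hμ'] using this
  rw [hμeq]
  linear_combination hD
-- helper for P ≤ 1/2
lemma keyineq_half (hd : 2 ≤ d) (n₁ n₂ : ℕ) (h₁ : 1 ≤ n₁) (h₂ : 1 ≤ n₂) (hn : n₁ + n₂ ≤ d)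
    (P : ℝ) (hP0 : 0 < P) (hPh : P ≤ 1/2) :
    P * (1-P) * (Real.log P - Real.log n₁ - Real.log (1-P) + Real.log n₂)^2 ≤ Nfun d := by
  have hP1 : P < 1 := by linarith
  have h1P : 0 < 1 - P := by linarith
  have hn₁ : (1:ℝ) ≤ (n₁:ℝ) := by exact_mod_cast h₁
  have hn₂ : (1:ℝ) ≤ (n₂:ℝ) := by exact_mod_cast h₂
  have hnd : (n₁:ℝ) + n₂ ≤ d := by exact_mod_cast hn
  have hd1' := hd1 hd
  -- W as a single log
  have hW : Real.log P - Real.log n₁ - Real.log (1-P) + Real.log n₂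
      = Real.log ((P * n₂) / ((1-P) * n₁)) := by
    rw [Real.log_div (by positivity) (by positivity), Real.log_mul (ne_of_gt hP0) (by positivity),
      Real.log_mul (ne_of_gt h1P) (by positivity)]
    ring
  have hX : Real.log ((1 - P) / P * ((d:ℝ) - 1)) ≥ 0 := by
    apply Real.log_nonneg
    have : (1:ℝ) ≤ (1-P)/P := by rw [le_div_iff₀ hP0]; linarith
    nlinarith
  set X := Real.log ((1 - P) / P * ((d:ℝ) - 1)) with hXdef
  have hub : Real.log ((P * n₂) / ((1-P) * n₁)) ≤ X := by
    apply Real.log_le_log (by positivity)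
    rw [div_le_iff₀ (by positivity)]
    have e1 : (1-P)/P * ((d:ℝ)-1) * ((1-P) * n₁) = (1-P)^2 * ((d:ℝ)-1) * n₁ / P := by
      field_simp
    rw [e1]
    rw [le_div_iff₀ hP0]
    have hn2d : (n₂:ℝ) ≤ (d:ℝ) - 1 := by linarith
    have hPP : P * P ≤ (1-P) * (1-P) := by nlinarith
    calc P * ↑n₂ * P = P * P * ↑n₂ := by ring
    _ ≤ (1-P) * (1-P) * ↑n₂ := mul_le_mul_of_nonneg_right hPP (by positivity)
    _ ≤ (1-P) * (1-P) * ((d:ℝ)-1) := mul_le_mul_of_nonneg_left hn2d (by positivity)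
    _ ≤ ((1-P) * (1-P) * ((d:ℝ)-1)) * ↑n₁ := le_mul_of_one_le_right (by nlinarith) hn₁
    _ = (1-P)^2 * ((d:ℝ)-1) * ↑n₁ := by ring
  have hlb : -X ≤ Real.log ((P * n₂) / ((1-P) * n₁)) := by
    have hprod : ((1-P)/P * ((d:ℝ)-1)) * ((P * n₂)/((1-P) * n₁)) = ((d:ℝ)-1) * n₂ / n₁ := by
      field_simp
    have hlog0 : 0 ≤ Real.log (((1-P)/P * ((d:ℝ)-1)) * ((P * n₂)/((1-P) * n₁))) := by
      apply Real.log_nonneg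
      rw [hprod, le_div_iff₀ (by positivity)]
      nlinarith
    rw [Real.log_mul (by positivity) (by positivity)] at hlog0
    rw [← hXdef] at hlog0
    linarith
  have hsq : (Real.log ((P * n₂) / ((1-P) * n₁)))^2 ≤ X^2 := sq_le_sq' hlb hub
  rw [hW]
  rcases lt_or_eq_of_le hPh with h | h
  · calc P * (1-P) * (Real.log ((P * n₂) / ((1-P) * n₁)))^2
        ≤ P * (1-P) * X^2 := by nlinarith [mul_pos hP0 h1P]
    _ ≤ Nfun d := Nmem hd hP0 h
  · have hX2 : X = Real.log ((d:ℝ)-1) := by rw [hXdef, h]; norm_num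
    calc P * (1-P) * (Real.log ((P * n₂) / ((1-P) * n₁)))^2
        ≤ P * (1-P) * X^2 := by nlinarith [mul_pos hP0 h1P]
    _ = (Real.log ((d:ℝ)-1))^2/4 := by rw [hX2, h]; ring
    _ ≤ Nfun d := quarter_le_N hd

lemma keyineq (hd : 2 ≤ d) (n₁ n₂ : ℕ) (h₁ : 1 ≤ n₁) (h₂ : 1 ≤ n₂) (hn : n₁ + n₂ ≤ d)
    (P : ℝ) (hP0 : 0 < P) (hP1 : P < 1) :
    P * (1-P) * (Real.log P - Real.log n₁ - Real.log (1-P) + Real.log n₂)^2 ≤ Nfun d := by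
  rcases le_or_gt P (1/2) with h | h
  · exact keyineq_half hd n₁ n₂ h₁ h₂ hn P hP0 h
  · have := keyineq_half hd n₂ n₁ h₂ h₁ (by omega) (1-P) (by linarith) (by linarith)
    have e : (1 - (1-P)) = P := by ring
    rw [e] at this
    calc P * (1-P) * (Real.log P - Real.log n₁ - Real.log (1-P) + Real.log n₂)^2
        = (1-P) * P * (Real.log (1-P) - Real.log n₂ - Real.log P + Real.log n₁)^2 := by ring
    _ ≤ Nfun d := this

lemma Fv_le_N (hd : 2 ≤ d) (q : Fin d → ℝ) (hq : q ∈ stdSimplex ℝ (Fin d)) :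
    Fv q ≤ Nfun d := by
  classical
  obtain ⟨m, hmS, hmax⟩ := (isCompact_stdSimplex ℝ (Fin d)).exists_isMaxOn
    ⟨q, hq⟩ Fv'_cont.continuousOn
  rw [Fv_eq_Fv' hq.1]
  refine le_trans (hmax hq) ?_
  rw [← Fv_eq_Fv' hmS.1]
  -- now bound Fv m
  set y : Fin d → ℝ := fun k => Real.log (m k) with hy
  set s : Finset (Fin d) := Finset.univ.filter (fun k => 0 < m k) with hs
  have hzero : ∀ k, k ∉ s → m k = 0 := by
    intro k hk
    rcases lt_or_eq_of_le (hmS.1 k) with h | h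
    · exact absurd (Finset.mem_filter.mpr ⟨Finset.mem_univ k, h⟩) hk
    · exact h.symm
  have hFO : ∀ i ∈ s, ∀ j ∈ s, (y i - y j) * (y i + y j + 2 - 2 * (∑ k, psiF (m k))) = 0 := by
    intro i hi j hj
    by_cases hij : i = j
    · rw [hij]; ring
    · exact FO m hmS hmax hij (Finset.mem_filter.mp hi).2 (Finset.mem_filter.mp hj).2
  -- sums restrict to s
  have hsum_s : ∀ f : ℝ → ℝ, f 0 = 0 → ∑ k, f (m k) = ∑ k ∈ s, f (m k) := by
    intro f hf0
    rw [← Finset.sum_subset (Finset.subset_univ s)]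
    intro k _ hk
    rw [hzero k hk, hf0]
  have hGf0 : Gf 0 = 0 := by simp [Gf]
  have hpsi0 : psiF 0 = 0 := by simp [psiF]
  have hsum1 : ∑ k ∈ s, m k = 1 := by
    have h := hsum_s (fun x => x) rfl
    exact h.symm.trans hmS.2
  by_cases hconst : ∀ i ∈ s, ∀ j ∈ s, y i = y j
  · -- uniform case: Fv m = 0
    have hsne : s.Nonempty := by
      by_contra hne
      rw [Finset.not_nonempty_iff_eq_empty] at hne
      rw [hne, Finset.sum_empty] at hsum1
      norm_num at hsum1
    obtain ⟨i₀, hi₀⟩ := hsne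
    have hmi₀ : 0 < m i₀ := (Finset.mem_filter.mp hi₀).2
    have hval : ∀ k ∈ s, m k = Real.exp (y i₀) := by
      intro k hk
      have : y k = y i₀ := hconst k hk i₀ hi₀
      rw [← this, hy]
      exact (Real.exp_log (Finset.mem_filter.mp hk).2).symm
    have hcard : (s.card : ℝ) * Real.exp (y i₀) = 1 := by
      rw [← hsum1, Finset.sum_congr rfl hval, Finset.sum_const, nsmul_eq_mul]
    have hGsum : ∑ k, Gf (m k) = (y i₀)^2 := by
      rw [hsum_s Gf hGf0, Finset.sum_congr rfl (fun k hk => by rw [hval k hk])]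
      unfold Gf
      rw [Finset.sum_const, nsmul_eq_mul, Real.log_exp]
      linear_combination (y i₀)^2 * hcard
    have hpsum : ∑ k, psiF (m k) = y i₀ := by
      rw [hsum_s psiF hpsi0, Finset.sum_congr rfl (fun k hk => by rw [hval k hk])]
      unfold psiF
      rw [Finset.sum_const, nsmul_eq_mul, Real.log_exp]
      linear_combination (y i₀) * hcard
    unfold Fv
    rw [hGsum, hpsum]
    have : (y i₀)^2 - (y i₀)^2 = 0 := by ring
    rw [this]
    exact N_nonneg hd
  · -- two-value case
    push_neg at hconst
    obtain ⟨i₀, hi₀, j₀, hj₀, hij₀⟩ := hconst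
    set a := y i₀ with ha
    set b := y j₀ with hb
    have hab : a + b + 2 - 2 * (∑ k, psiF (m k)) = 0 := by
      have := hFO i₀ hi₀ j₀ hj₀
      rcases mul_eq_zero.mp this with h | h
      · exact absurd (by linarith [h] : a = b) hij₀
      · exact h
    have hcl : ∀ k ∈ s, y k = a ∨ y k = b := by
      intro k hk
      rcases mul_eq_zero.mp (hFO k hk i₀ hi₀) with h | h
      · left; linarith
      · right; linarith
    set s₁ : Finset (Fin d) := s.filter (fun k => y k = a) with hs₁
    set s₂ : Finset (Fin d) := s.filter (fun k => ¬ (y k = a)) with hs₂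
    have hs₂b : ∀ k ∈ s₂, y k = b := by
      intro k hk
      have hks : k ∈ s := (Finset.mem_filter.mp hk).1
      rcases hcl k hks with h | h
      · exact absurd h (Finset.mem_filter.mp hk).2
      · exact h
    have hv₁ : ∀ k ∈ s₁, m k = Real.exp a := by
      intro k hk
      have := (Finset.mem_filter.mp hk).2
      rw [← this, hy]
      exact (Real.exp_log (Finset.mem_filter.mp (Finset.mem_filter.mp hk).1).2).symm
    have hv₂ : ∀ k ∈ s₂, m k = Real.exp b := by
      intro k hk
      rw [← hs₂b k hk, hy]
      exact (Real.exp_log (Finset.mem_filter.mp (Finset.mem_filter.mp hk).1).2).symm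
    have hi₀s₁ : i₀ ∈ s₁ := Finset.mem_filter.mpr ⟨hi₀, rfl⟩
    have hj₀s₂ : j₀ ∈ s₂ := Finset.mem_filter.mpr ⟨hj₀, fun h => hij₀ (by rw [← hb] at h; exact h.symm ▸ rfl)⟩
    set n₁ := s₁.card with hn₁
    set n₂ := s₂.card with hn₂
    have hn₁1 : 1 ≤ n₁ := Finset.card_pos.mpr ⟨i₀, hi₀s₁⟩
    have hn₂1 : 1 ≤ n₂ := Finset.card_pos.mpr ⟨j₀, hj₀s₂⟩
    have hnd : n₁ + n₂ ≤ d := by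
      rw [hn₁, hn₂, Finset.card_filter_add_card_filter_not]
      calc s.card ≤ Finset.univ.card := Finset.card_le_univ s
      _ = d := Finset.card_univ.trans (Fintype.card_fin d)
    -- split sums
    have hsplit : ∀ f : ℝ → ℝ, ∑ k ∈ s, f (m k) = n₁ * f (Real.exp a) + n₂ * f (Real.exp b) := by
      intro f
      rw [← Finset.sum_filter_add_sum_filter_not s (fun k => y k = a)]
      congr 1
      · rw [Finset.sum_congr rfl (fun k hk => by rw [hv₁ k hk]), Finset.sum_const, nsmul_eq_mul]
      · rw [Finset.sum_congr rfl (fun k hk => by rw [hv₂ k hk]), Finset.sum_const, nsmul_eq_mul]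
    set P := (n₁ : ℝ) * Real.exp a with hP
    set Q := (n₂ : ℝ) * Real.exp b with hQ
    have hPQ : P + Q = 1 := by
      have h := hsplit (fun x => x)
      rw [hP, hQ]
      linarith [h, hsum1]
    have hP0 : 0 < P := mul_pos (by exact_mod_cast hn₁1) (Real.exp_pos _)
    have hQ0 : 0 < Q := mul_pos (by exact_mod_cast hn₂1) (Real.exp_pos _)
    have hP1 : P < 1 := by linarith
    have hGsum : ∑ k, Gf (m k) = P * a^2 + Q * b^2 := by
      rw [hsum_s Gf hGf0, hsplit Gf]
      unfold Gf
      rw [Real.log_exp, Real.log_exp]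
      ring
    have hpsum : ∑ k, psiF (m k) = P * a + Q * b := by
      rw [hsum_s psiF hpsi0, hsplit psiF]
      unfold psiF
      rw [Real.log_exp, Real.log_exp]
      ring
    have hFveq : Fv m = P * (1-P) * (a - b)^2 := by
      unfold Fv
      rw [hGsum, hpsum]
      have hQP : Q = 1 - P := by linarith
      rw [hQP]
      ring
    have haP : a = Real.log P - Real.log n₁ := by
      rw [hP, Real.log_mul (by exact_mod_cast (show n₁ ≠ 0 by omega)) (Real.exp_ne_zero _), Real.log_exp]
      ring
    have hbQ : b = Real.log (1-P) - Real.log n₂ := by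
      have hQP : Q = 1 - P := by linarith
      rw [← hQP, hQ, Real.log_mul (by exact_mod_cast (show n₂ ≠ 0 by omega)) (Real.exp_ne_zero _), Real.log_exp]
      ring
    rw [hFveq, haP, hbQ]
    have := keyineq hd n₁ n₂ hn₁1 hn₂1 hnd P hP0 hP1
    calc P * (1-P) * (Real.log P - Real.log n₁ - (Real.log (1-P) - Real.log n₂))^2
        = P * (1-P) * (Real.log P - Real.log n₁ - Real.log (1-P) + Real.log n₂)^2 := by ring
    _ ≤ Nfun d := this


end HeatCapAux

/-- maximum heat capacity in `d` dimensions. -/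
theorem heat_capacity_le (d : ℕ) (hd : 2 ≤ d) (E : Fin d → ℝ) (T : ℝ) (hT : 0 < T)
    (p : Fin d → ℝ)
    (hp : ∀ i, p i = Real.exp (-(E i) / T) / ∑ j, Real.exp (-(E j) / T)) :
    (∑ i, p i * (E i)^2 - (∑ i, p i * E i)^2) / T^2 ≤ Nfun d ∧
    Nfun d < (1/4) * (Real.log ((d:ℝ) - 1))^2 + 1 := by
  have hdpos : 0 < d := by omega
  have hne : Nonempty (Fin d) := ⟨⟨0, hdpos⟩⟩
  set Z := ∑ j, Real.exp (-(E j) / T) with hZ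
  have hZ0 : 0 < Z := Finset.sum_pos (fun j _ => Real.exp_pos _) ⟨⟨0, hdpos⟩, Finset.mem_univ _⟩
  have hp0 : ∀ i, 0 < p i := by
    intro i; rw [hp i]; positivity
  have hps : ∑ i, p i = 1 := by
    have : ∑ i, p i = (∑ i, Real.exp (-(E i) / T)) / Z := by
      rw [Finset.sum_div]
      exact Finset.sum_congr rfl (fun i _ => hp i)
    rw [this, ← hZ, div_self (ne_of_gt hZ0)]
  have hlog : ∀ i, Real.log (p i) = -(E i)/T - Real.log Z := by
    intro i
    rw [hp i, Real.log_div (Real.exp_ne_zero _) (ne_of_gt hZ0), Real.log_exp]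
  have hE : ∀ i, E i = -T * (Real.log (p i) + Real.log Z) := by
    intro i
    have := hlog i
    field_simp at this ⊢
    linarith [this]
  constructor
  · set c := Real.log Z with hc
    set μ := ∑ i, p i * Real.log (p i) with hμ
    have h1 : ∑ i, p i * (E i)^2
        = T^2 * ((∑ i, p i * (Real.log (p i))^2) + 2*c*μ + c^2) := by
      have : ∀ i, p i * (E i)^2 = T^2 * (p i * (Real.log (p i))^2)
          + (2*T^2*c) * (p i * Real.log (p i)) + (T^2*c^2) * p i := by
        intro i; rw [hE i]; ring
      rw [Finset.sum_congr rfl (fun i _ => this i)]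
      rw [Finset.sum_add_distrib, Finset.sum_add_distrib, ← Finset.mul_sum, ← Finset.mul_sum,
        ← Finset.mul_sum, hps]
      rw [← hμ]
      ring
    have h2 : ∑ i, p i * E i = -T * (μ + c) := by
      have : ∀ i, p i * E i = (-T) * (p i * Real.log (p i)) + (-T*c) * p i := by
        intro i; rw [hE i]; ring
      rw [Finset.sum_congr rfl (fun i _ => this i)]
      rw [Finset.sum_add_distrib, ← Finset.mul_sum, ← Finset.mul_sum, hps, ← hμ]
      ring
    have h3 : (∑ i, p i * (E i)^2 - (∑ i, p i * E i)^2) = T^2 * Fv p := by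
      rw [h1, h2]
      unfold Fv Gf psiF
      rw [← hμ]
      ring
    rw [h3]
    have hT2 : (T^2 * Fv p) / T^2 = Fv p := by
      field_simp
    rw [hT2]
    exact Fv_le_N hd p ⟨fun i => (hp0 i).le, hps⟩
  · exact Nfun_lt hd


end
end
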